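/- arXiv:2405.17172 — 4 statements merged into one kernel-verified Lean document; each statement's English description precedes it below -/
import Mathlib

section
/- Let A be a set of n points in the plane in general position. If the complete geometric graph induced by A contains p pairwise crossing edges (p ≥ 1), then its edge set can be partitioned into n − p plane subgraphs. -/
noncomputable section

/-- Points live in the Euclidean plane. -/
abbrev Pt := EuclideanSpace ℝ (Fin 2)

/-- A set of points is in general position if no three of its points are collinear. -/
def GenPos (A : Set Pt) : Prop :=
  ∀ p ∈ A, ∀ q ∈ A, ∀ r ∈ A, p ≠ q → p ≠ r → q ≠ r → ¬ Collinear ℝ ({p, q, r} : Set Pt)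

/-- The edge set of the complete geometric graph induced by `A`: all unordered pairs
of distinct points of `A`. -/
def edges (A : Set Pt) : Set (Sym2 Pt) :=
  {e | ∃ a ∈ A, ∃ b ∈ A, a ≠ b ∧ e = s(a, b)}

/-- Two edges cross if they share no endpoint and their relative interiors
(open segments) have a common point. -/
def Cross (e f : Sym2 Pt) : Prop :=
  ∃ a b c d : Pt, e = s(a, b) ∧ f = s(c, d) ∧
    a ≠ c ∧ a ≠ d ∧ b ≠ c ∧ b ≠ d ∧
    (openSegment ℝ a b ∩ openSegment ℝ c d).Nonempty

/-- A set of edges is plane if no two of its edges cross. -/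
def PlaneEdges (E : Set (Sym2 Pt)) : Prop := ∀ e ∈ E, ∀ f ∈ E, ¬ Cross e f

/-- `F` is a partition of the edge set of the complete geometric graph induced by `A`
into `m` (possibly empty) classes. -/
def IsPartitionInto (A : Set Pt) (m : ℕ) (F : Fin m → Set (Sym2 Pt)) : Prop :=
  (⋃ i, F i) = edges A ∧ Pairwise (Function.onFun Disjoint F)

/-! ### Auxiliary material -/

/-- The planar cross product (determinant) of two vectors. -/
def cross2 (u v : Pt) : ℝ := u 0 * v 1 - u 1 * v 0

lemma cross2_smul_right (u v : Pt) (t : ℝ) : cross2 u (t • v) = t * cross2 u v := by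
  simp [cross2]; ring

lemma cross2_add_right (u v w : Pt) : cross2 u (v + w) = cross2 u v + cross2 u w := by
  simp [cross2]; ring

lemma cross2_sub_right (u v w : Pt) : cross2 u (v - w) = cross2 u v - cross2 u w := by
  simp [cross2]; ring

lemma cross2_self (u : Pt) : cross2 u u = 0 := by simp [cross2]; ring

lemma cross2_swap (u v : Pt) : cross2 v u = - cross2 u v := by simp [cross2]; ring

lemma exists_smul_of_cross2 (u v : Pt) (hu : u ≠ 0) (h : cross2 u v = 0) :
    ∃ k : ℝ, v = k • u := by
  have h' : u 0 * v 1 - u 1 * v 0 = 0 := h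
  by_cases h0 : u 0 = 0
  · have h1 : u 1 ≠ 0 := by
      intro h1; apply hu; ext i; fin_cases i <;> simp [h0, h1]
    have hv0 : v 0 = 0 := by
      have : u 1 * v 0 = 0 := by rw [h0] at h'; linarith
      exact (mul_eq_zero.mp this).resolve_left h1
    refine ⟨v 1 / u 1, ?_⟩
    ext i; fin_cases i
    · simp [hv0, h0]
    · simp; field_simp
  · refine ⟨v 0 / u 0, ?_⟩
    ext i; fin_cases i
    · simp; field_simp
    · simp; field_simp; nlinarith [h']

lemma collinear_of_cross2 (a b c : Pt) (hab : a ≠ b) (h : cross2 (b - a) (c - a) = 0) :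
    Collinear ℝ ({a, b, c} : Set Pt) := by
  obtain ⟨k, hk⟩ := exists_smul_of_cross2 (b - a) (c - a) (sub_ne_zero.mpr (Ne.symm hab)) h
  rw [collinear_iff_of_mem (Set.mem_insert a _)]
  refine ⟨b - a, fun p hp => ?_⟩
  rcases hp with rfl | rfl | rfl
  · exact ⟨0, by simp⟩
  · exact ⟨1, by simp⟩
  · exact ⟨k, by rw [← hk]; simp⟩

lemma cross_apart {e f : Sym2 Pt} (h : Cross e f) {z : Pt} (hz : z ∈ e) (hz' : z ∈ f) :
    False := by
  obtain ⟨a, b, c, d, rfl, rfl, h1, h2, h3, h4, -⟩ := h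
  rw [Sym2.mem_iff] at hz hz'
  rcases hz with rfl | rfl <;> rcases hz' with h | h <;> simp_all

lemma openSegment_eq_of_sym2 {a b c d : Pt} (h : s(a, b) = s(c, d)) :
    openSegment ℝ a b = openSegment ℝ c d := by
  rw [Sym2.eq_iff] at h
  rcases h with ⟨rfl, rfl⟩ | ⟨rfl, rfl⟩
  · rfl
  · exact openSegment_symm ℝ _ _

lemma cross_symm {e f : Sym2 Pt} (h : Cross e f) : Cross f e := by
  obtain ⟨a, b, c, d, he, hf, h1, h2, h3, h4, q, hq1, hq2⟩ := h
  exact ⟨c, d, a, b, hf, he, h1.symm, h3.symm, h2.symm, h4.symm, q, hq2, hq1⟩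

lemma mem_openSegment'' (x y q : Pt) (h : q ∈ openSegment ℝ x y) :
    ∃ t : ℝ, 0 < t ∧ t < 1 ∧ q = x + t • (y - x) := by
  obtain ⟨α, β, hα, hβ, hab, hq⟩ := h
  have hα' : α = 1 - β := by linarith
  subst hα'
  exact ⟨β, hβ, by linarith, by rw [← hq]; module⟩

/-- The "double star" associated to a segment `ab`. -/
def Dset (a b : Pt) : Set (Sym2 Pt) :=
  {f | f = s(a, b) ∨ (∃ z, f = s(a, z) ∧ cross2 (b - a) (z - a) < 0) ∨
    (∃ z, f = s(b, z) ∧ 0 < cross2 (b - a) (z - a))}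

lemma main_case (a b x y : Pt) (hx : cross2 (b - a) (x - a) < 0)
    (hy : 0 < cross2 (b - a) (y - a)) : ¬ Cross s(a, x) s(b, y) := by
  rintro ⟨a', b', c', d', he, hf, -, -, -, -, q, hq1, hq2⟩
  rw [← openSegment_eq_of_sym2 he] at hq1
  rw [← openSegment_eq_of_sym2 hf] at hq2
  obtain ⟨t, ht0, ht1, rfl⟩ := mem_openSegment'' _ _ _ hq1
  obtain ⟨s, hs0, hs1, heq⟩ := mem_openSegment'' _ _ _ hq2
  have c1 : cross2 (b - a) (a + t • (x - a) - a) = t * cross2 (b - a) (x - a) := by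
    rw [add_sub_cancel_left, cross2_smul_right]
  have c2 : cross2 (b - a) (a + t • (x - a) - a) = s * cross2 (b - a) (y - a) := by
    rw [heq]
    have : b + s • (y - b) - a = (b - a) + s • ((y - a) - (b - a)) := by module
    rw [this, cross2_add_right, cross2_self, cross2_smul_right, cross2_sub_right, cross2_self]
    ring
  nlinarith [c1, c2]

lemma plane_Dset (a b : Pt) : PlaneEdges (Dset a b) := by
  intro e he f hf hc
  rcases he with rfl | ⟨z, rfl, hz⟩ | ⟨z, rfl, hz⟩ <;>
    rcases hf with rfl | ⟨w, rfl, hw⟩ | ⟨w, rfl, hw⟩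
  · exact cross_apart hc (Sym2.mem_mk_left a b) (Sym2.mem_mk_left a b)
  · exact cross_apart hc (Sym2.mem_mk_left a b) (Sym2.mem_mk_left a w)
  · exact cross_apart hc (Sym2.mem_mk_right a b) (Sym2.mem_mk_left b w)
  · exact cross_apart hc (Sym2.mem_mk_left a z) (Sym2.mem_mk_left a b)
  · exact cross_apart hc (Sym2.mem_mk_left a z) (Sym2.mem_mk_left a w)
  · exact main_case a b z w hz hw hc
  · exact cross_apart hc (Sym2.mem_mk_left b z) (Sym2.mem_mk_right a b)
  · exact main_case a b w z hw hz (cross_symm hc)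
  · exact cross_apart hc (Sym2.mem_mk_left b z) (Sym2.mem_mk_left b w)

lemma plane_star (v : Pt) : PlaneEdges {f : Sym2 Pt | v ∈ f} := by
  intro e he f hf hc
  exact cross_apart hc he hf

lemma cover_pair (a b c d : Pt)
    (hK : cross2 (b - a) (d - c) ≠ 0)
    (hseg : (openSegment ℝ a b ∩ openSegment ℝ c d).Nonempty) :
    s(a, c) ∈ Dset a b ∪ Dset c d ∧ s(a, d) ∈ Dset a b ∪ Dset c d ∧
    s(b, c) ∈ Dset a b ∪ Dset c d ∧ s(b, d) ∈ Dset a b ∪ Dset c d := by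
  obtain ⟨q, hq1, hq2⟩ := hseg
  obtain ⟨t, ht0, ht1, rfl⟩ := mem_openSegment'' _ _ _ hq1
  obtain ⟨s, hs0, hs1, heq⟩ := mem_openSegment'' _ _ _ hq2
  have hw : c - a = t • (b - a) - s • (d - c) := by
    linear_combination (norm := module) -heq
  have F1 : cross2 (b - a) (c - a) = -(s * cross2 (b - a) (d - c)) := by
    rw [hw, cross2_sub_right, cross2_smul_right, cross2_smul_right, cross2_self]; ring
  have F2 : cross2 (b - a) (d - a) = (1 - s) * cross2 (b - a) (d - c) := by
    have h2 : d - a = (c - a) + (d - c) := by module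
    rw [h2, cross2_add_right, F1]; ring
  have F3 : cross2 (d - c) (a - c) = t * cross2 (b - a) (d - c) := by
    have h3 : a - c = s • (d - c) - t • (b - a) := by
      linear_combination (norm := module) -hw
    rw [h3, cross2_sub_right, cross2_smul_right, cross2_smul_right, cross2_self,
      cross2_swap (b - a) (d - c)]
    ring
  have F4 : cross2 (d - c) (b - c) = -((1 - t) * cross2 (b - a) (d - c)) := by
    have h4 : b - c = (1 - t) • (b - a) + s • (d - c) := by
      linear_combination (norm := module) -hw
    rw [h4, cross2_add_right, cross2_smul_right, cross2_smul_right, cross2_self,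
      cross2_swap (b - a) (d - c)]
    ring
  rcases lt_or_gt_of_ne hK with h | h
  · exact ⟨Or.inr (Or.inr (Or.inl ⟨a, Sym2.eq_swap, by rw [F3]; nlinarith⟩)),
      Or.inl (Or.inr (Or.inl ⟨d, rfl, by rw [F2]; nlinarith⟩)),
      Or.inl (Or.inr (Or.inr ⟨c, rfl, by rw [F1]; nlinarith⟩)),
      Or.inr (Or.inr (Or.inr ⟨b, Sym2.eq_swap, by rw [F4]; nlinarith⟩))⟩
  · exact ⟨Or.inl (Or.inr (Or.inl ⟨c, rfl, by rw [F1]; nlinarith⟩)),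
      Or.inr (Or.inr (Or.inr ⟨a, Sym2.eq_swap, by rw [F3]; nlinarith⟩)),
      Or.inr (Or.inr (Or.inl ⟨b, Sym2.eq_swap, by rw [F4]; nlinarith⟩)),
      Or.inl (Or.inr (Or.inr ⟨d, rfl, by rw [F2]; nlinarith⟩))⟩

lemma K_ne_zero (a b c d : Pt) (hab : a ≠ b) (hcol : ¬ Collinear ℝ ({a, b, c} : Set Pt))
    (hseg : (openSegment ℝ a b ∩ openSegment ℝ c d).Nonempty) :
    cross2 (b - a) (d - c) ≠ 0 := by
  intro h0
  obtain ⟨k, hk⟩ := exists_smul_of_cross2 (b - a) (d - c) (sub_ne_zero.mpr (Ne.symm hab)) h0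
  obtain ⟨q, hq1, hq2⟩ := hseg
  obtain ⟨t, ht0, ht1, rfl⟩ := mem_openSegment'' _ _ _ hq1
  obtain ⟨s, hs0, hs1, heq⟩ := mem_openSegment'' _ _ _ hq2
  apply hcol
  apply collinear_of_cross2 a b c hab
  have hca : c - a = (t - s * k) • (b - a) := by
    have hw : c - a = t • (b - a) - s • (d - c) := by
      linear_combination (norm := module) -heq
    rw [hw, hk]; module
  rw [hca, cross2_smul_right, cross2_self, mul_zero]

lemma partition_of_cover {X : Type*} {m : ℕ} {S : Set X} {ι : Type*} [Fintype ι]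
    (hcard : Fintype.card ι = m) (G : ι → Set X) (hcov : S ⊆ ⋃ i, G i)
    (P : Set X → Prop) (hmono : ∀ E E' : Set X, E' ⊆ E → P E → P E') (hP : ∀ i, P (G i)) :
    ∃ F : Fin m → Set X, (⋃ k, F k) = S ∧ Pairwise (Function.onFun Disjoint F) ∧
      ∀ k, P (F k) := by
  classical
  let σ : Fin m ≃ ι := (Fintype.equivFinOfCardEq hcard).symm
  refine ⟨fun k => {x | x ∈ S ∧ x ∈ G (σ k) ∧ ∀ j, j < k → x ∉ G (σ j)}, ?_, ?_, ?_⟩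
  · apply Set.Subset.antisymm
    · intro x hx
      simp only [Set.mem_iUnion] at hx
      obtain ⟨k, hk, -⟩ := hx
      exact hk
    · intro x hx
      have hne : (Finset.univ.filter (fun k : Fin m => x ∈ G (σ k))).Nonempty := by
        obtain ⟨i, hi⟩ := Set.mem_iUnion.mp (hcov hx)
        exact ⟨σ.symm i, by simp [Finset.mem_filter, σ.apply_symm_apply, hi]⟩
      set k₀ := (Finset.univ.filter (fun k : Fin m => x ∈ G (σ k))).min' hne with hk₀
      have hk₀mem : x ∈ G (σ k₀) := by
        have := Finset.min'_mem _ hne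
        simp only [Finset.mem_filter] at this
        exact this.2
      refine Set.mem_iUnion.mpr ⟨k₀, hx, hk₀mem, fun j hj hjmem => ?_⟩
      have : k₀ ≤ j := Finset.min'_le _ j (by simp [Finset.mem_filter, hjmem])
      exact absurd hj (not_lt.mpr this)
  · intro k k' hkk'
    rcases lt_or_gt_of_ne hkk' with h | h
    · refine Set.disjoint_left.mpr fun x hx hx' => ?_
      exact hx'.2.2 k h hx.2.1
    · refine Set.disjoint_left.mpr fun x hx hx' => ?_
      exact hx.2.2 k' h hx'.2.1
  · intro k
    exact hmono (G (σ k)) _ (fun x hx => hx.2.1) (hP (σ k))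

/-- If the complete geometric graph on `n` points in general position contains `p ≥ 1`
pairwise crossing edges, then its edge set can be partitioned into `n - p`
plane subgraphs. -/
theorem crossing_family_partition (n p : ℕ) (hp : 1 ≤ p)
    (A : Finset Pt) (hA : A.card = n) (hgp : GenPos ↑A)
    (C : Finset (Sym2 Pt)) (hCsub : ↑C ⊆ edges ↑A) (hCcard : C.card = p)
    (hcross : ∀ e ∈ C, ∀ f ∈ C, e ≠ f → Cross e f) :
    ∃ F : Fin (n - p) → Set (Sym2 Pt),
      IsPartitionInto ↑A (n - p) F ∧ ∀ i, PlaneEdges (F i) := by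
  classical
  -- choose representatives of the crossing edges
  have hrep : ∀ e : Sym2 Pt, ∃ a b : Pt, e ∈ C →
      a ∈ A ∧ b ∈ A ∧ a ≠ b ∧ e = s(a, b) := by
    intro e
    by_cases he : e ∈ C
    · obtain ⟨a, ha, b, hb, hab, hef⟩ := hCsub (Finset.mem_coe.mpr he)
      exact ⟨a, b, fun _ => ⟨ha, hb, hab, hef⟩⟩
    · exact ⟨0, 0, fun h => absurd h he⟩
  choose fa fb hrep using hrep
  have hfaA : ∀ e ∈ C, fa e ∈ A := fun e he => (hrep e he).1
  have hfbA : ∀ e ∈ C, fb e ∈ A := fun e he => (hrep e he).2.1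
  have hfne : ∀ e ∈ C, fa e ≠ fb e := fun e he => (hrep e he).2.2.1
  have hfe : ∀ e ∈ C, e = s(fa e, fb e) := fun e he => (hrep e he).2.2.2
  have hmemfa : ∀ e ∈ C, fa e ∈ e := fun e he => by
    have h := Sym2.mem_mk_left (fa e) (fb e)
    rw [← hfe e he] at h; exact h
  have hmemfb : ∀ e ∈ C, fb e ∈ e := fun e he => by
    have h := Sym2.mem_mk_right (fa e) (fb e)
    rw [← hfe e he] at h; exact h
  -- the special points
  set spec : Finset Pt := C.biUnion (fun e => {fa e, fb e}) with hspec
  have hspec_mem : ∀ z, z ∈ spec ↔ ∃ e ∈ C, z = fa e ∨ z = fb e := by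
    intro z
    simp [hspec, Finset.mem_biUnion]
  have hdisj : ∀ e ∈ C, ∀ e' ∈ C, e ≠ e' →
      Disjoint ({fa e, fb e} : Finset Pt) {fa e', fb e'} := by
    intro e he e' he' hne
    rw [Finset.disjoint_left]
    intro z hz hz'
    have hcr := hcross e he e' he' hne
    have hze : z ∈ e := by
      rcases Finset.mem_insert.mp hz with rfl | h
      · exact hmemfa e he
      · rw [Finset.mem_singleton.mp h]; exact hmemfb e he
    have hze' : z ∈ e' := by
      rcases Finset.mem_insert.mp hz' with rfl | h
      · exact hmemfa e' he'
      · rw [Finset.mem_singleton.mp h]; exact hmemfb e' he'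
    exact cross_apart hcr hze hze'
  have hspec_card : spec.card = 2 * p := by
    rw [hspec, Finset.card_biUnion hdisj]
    have : ∀ e ∈ C, ({fa e, fb e} : Finset Pt).card = 2 := fun e he =>
      Finset.card_pair (hfne e he)
    rw [Finset.sum_congr rfl this, Finset.sum_const, hCcard]
    ring
  have hspecA : spec ⊆ A := by
    intro z hz
    obtain ⟨e, he, hz⟩ := (hspec_mem z).mp hz
    rcases hz with rfl | rfl
    · exact hfaA e he
    · exact hfbA e he
  have h2p : 2 * p ≤ n := by
    rw [← hspec_card, ← hA]; exact Finset.card_le_card hspecA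
  -- the index type
  have hι : Fintype.card ({e // e ∈ C} ⊕ {v // v ∈ A \ spec}) = n - p := by
    rw [Fintype.card_sum, Fintype.card_coe, Fintype.card_coe, hCcard,
      Finset.card_sdiff_of_subset hspecA, hA, hspec_card]
    omega
  set G : ({e // e ∈ C} ⊕ {v // v ∈ A \ spec}) → Set (Sym2 Pt) :=
    Sum.elim (fun e => Dset (fa e.1) (fb e.1)) (fun v => {f | v.1 ∈ f}) with hG
  -- coverage
  have hcov : edges ↑A ⊆ ⋃ i, G i := by
    rintro f ⟨x, hx, y, hy, hxy, rfl⟩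
    rw [Finset.mem_coe] at hx hy
    by_cases hxs : x ∈ spec
    · by_cases hys : y ∈ spec
      · obtain ⟨e, he, hxe⟩ := (hspec_mem x).mp hxs
        obtain ⟨e', he', hye⟩ := (hspec_mem y).mp hys
        by_cases hee : e = e'
        · subst hee
          have hfeq : s(x, y) = s(fa e, fb e) := by
            rcases hxe with rfl | rfl <;> rcases hye with rfl | rfl
            · exact absurd rfl hxy
            · rfl
            · exact Sym2.eq_swap
            · exact absurd rfl hxy
          exact Set.mem_iUnion.mpr ⟨Sum.inl ⟨e, he⟩, Or.inl hfeq⟩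
        · have hcr := hcross e he e' he' hee
          have hseg : (openSegment ℝ (fa e) (fb e) ∩
              openSegment ℝ (fa e') (fb e')).Nonempty := by
            obtain ⟨a', b', c', d', he1, he2, -, -, -, -, hne⟩ := hcr
            rw [hfe e he] at he1
            rw [hfe e' he'] at he2
            rw [openSegment_eq_of_sym2 he1, openSegment_eq_of_sym2 he2]
            exact hne
          have hne1 : fa e ≠ fa e' := fun h =>
            cross_apart hcr (hmemfa e he) (h ▸ hmemfa e' he')
          have hne2 : fb e ≠ fa e' := fun h =>
            cross_apart hcr (hmemfb e he) (h ▸ hmemfa e' he')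
          have hcol : ¬ Collinear ℝ ({fa e, fb e, fa e'} : Set Pt) :=
            hgp (fa e) (Finset.mem_coe.mpr (hfaA e he))
              (fb e) (Finset.mem_coe.mpr (hfbA e he))
              (fa e') (Finset.mem_coe.mpr (hfaA e' he'))
              (hfne e he) hne1 hne2
          have hK := K_ne_zero (fa e) (fb e) (fa e') (fb e') (hfne e he) hcol hseg
          obtain ⟨m1, m2, m3, m4⟩ := cover_pair (fa e) (fb e) (fa e') (fb e') hK hseg
          have hmem : s(x, y) ∈ Dset (fa e) (fb e) ∪ Dset (fa e') (fb e') := by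
            rcases hxe with rfl | rfl <;> rcases hye with rfl | rfl
            · exact m1
            · exact m2
            · exact m3
            · exact m4
          rcases hmem with h | h
          · exact Set.mem_iUnion.mpr ⟨Sum.inl ⟨e, he⟩, h⟩
          · exact Set.mem_iUnion.mpr ⟨Sum.inl ⟨e', he'⟩, h⟩
      · exact Set.mem_iUnion.mpr
          ⟨Sum.inr ⟨y, Finset.mem_sdiff.mpr ⟨hy, hys⟩⟩, Sym2.mem_mk_right x y⟩
    · exact Set.mem_iUnion.mpr
        ⟨Sum.inr ⟨x, Finset.mem_sdiff.mpr ⟨hx, hxs⟩⟩, Sym2.mem_mk_left x y⟩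
  -- assemble
  have hmono : ∀ E E' : Set (Sym2 Pt), E' ⊆ E → PlaneEdges E → PlaneEdges E' :=
    fun E E' hsub hPE e he f hf => hPE e (hsub he) f (hsub hf)
  have hPG : ∀ i, PlaneEdges (G i) := by
    rintro (e | v)
    · exact plane_Dset _ _
    · exact plane_star _
  obtain ⟨F, hF1, hF2, hF3⟩ := partition_of_cover hι G hcov PlaneEdges hmono hPG
  exact ⟨F, ⟨hF1, hF2⟩, hF3⟩
end
end

section
/- Let m be a positive integer and let B = B₁ ∪ B₂ ∪ B₃ ∪ B₄ be a set of 4m points in the plane in general position, where B₁, B₂, B₃, B₄ are pairwise disjoint sets with |B₁| = |B₂| = |B₃| = |B₄| = m, such that for every choice of points p₁ ∈ B₁, p₂ ∈ B₂, p₃ ∈ B₃, p₄ ∈ B₄, the point p₄ lies in the convex hull of {p₁, p₂, p₃}. Then the edge set of the complete geometric graph induced by B can be partitioned into at most 3m plane subgraphs, each of which is a plane star forest consisting of at most two stars. -/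
noncomputable section

/-- A star: a set of edges all sharing a common endpoint. -/
def IsStar (E : Set (Sym2 Pt)) : Prop := ∃ a : Pt, ∀ e ∈ E, a ∈ e

/-- A star forest consisting of at most two stars: a union of two stars that are
vertex-disjoint. -/
def AtMostTwoStarForest (E : Set (Sym2 Pt)) : Prop :=
  ∃ E₁ E₂ : Set (Sym2 Pt), E = E₁ ∪ E₂ ∧ IsStar E₁ ∧ IsStar E₂ ∧
    ∀ e ∈ E₁, ∀ f ∈ E₂, ∀ v : Pt, v ∈ e → v ∉ f

namespace FCaux

/-- Twice the signed area of the triangle `p q x`. -/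
def det2 (p q x : Pt) : ℝ := (q 0 - p 0) * (x 1 - p 1) - (q 1 - p 1) * (x 0 - p 0)

lemma det2_self₁ (p q : Pt) : det2 p q p = 0 := by unfold det2; ring

lemma det2_self₂ (p q : Pt) : det2 p q q = 0 := by unfold det2; ring

lemma coord_comb2 (x y : Pt) (t s : ℝ) (i : Fin 2) :
    (t • x + s • y) i = t * x i + s * y i := by
  simp [PiLp.add_apply, PiLp.smul_apply]

lemma coord_comb3 (x y z : Pt) (t s r : ℝ) (i : Fin 2) :
    (t • x + s • y + r • z) i = t * x i + s * y i + r * z i := by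
  simp [PiLp.add_apply, PiLp.smul_apply]

lemma det2_comb2 (p q x y : Pt) (t s : ℝ) (h : t + s = 1) :
    det2 p q (t • x + s • y) = t * det2 p q x + s * det2 p q y := by
  have hs : s = 1 - t := by linarith
  subst hs
  simp only [det2, coord_comb2]
  ring

lemma det2_comb3 (p q x y z : Pt) (t s r : ℝ) (h : t + s + r = 1) :
    det2 p q (t • x + s • y + r • z) =
      t * det2 p q x + s * det2 p q y + r * det2 p q z := by
  have hr : r = 1 - t - s := by linarith
  subst hr
  simp only [det2, coord_comb3]
  ring

/-- If the determinant vanishes, the three points are collinear. -/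
lemma collinear_of_det2 {p q x : Pt} (hpq : p ≠ q) (h : det2 p q x = 0) :
    Collinear ℝ ({p, q, x} : Set Pt) := by
  rw [collinear_iff_of_mem (Set.mem_insert p _)]
  refine ⟨q - p, ?_⟩
  intro y hy
  have hcase : y = p ∨ y = q ∨ y = x := by simpa using hy
  have hne : q 0 - p 0 ≠ 0 ∨ q 1 - p 1 ≠ 0 := by
    by_contra hcon
    push_neg at hcon
    apply hpq
    apply PiLp.ext
    intro i
    fin_cases i
    · have := hcon.1; simpa using by linarith [hcon.1]
    · simpa using by linarith [hcon.2]
  have key : ∀ c : ℝ, (∀ i : Fin 2, y i = c * (q i - p i) + p i) → ∃ r : ℝ, y = r • (q - p) +ᵥ p := by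
    intro c hc
    refine ⟨c, ?_⟩
    apply PiLp.ext
    intro i
    have : (c • (q - p) +ᵥ p) i = c * (q i - p i) + p i := by
      show (c • (q - p) + p) i = _
      simp [PiLp.add_apply, PiLp.smul_apply, PiLp.sub_apply]
    rw [this]
    exact hc i
  rcases hcase with hy' | hy' | hy'
  · subst hy'
    exact key 0 (by intro i; ring)
  · subst hy'
    exact key 1 (by intro i; ring)
  · subst hy'
    unfold det2 at h
    rcases hne with h0 | h1
    · refine key ((y 0 - p 0) / (q 0 - p 0)) ?_
      intro i
      fin_cases i
      · show y 0 = (y 0 - p 0) / (q 0 - p 0) * (q 0 - p 0) + p 0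
        field_simp
        ring
      · show y 1 = (y 0 - p 0) / (q 0 - p 0) * (q 1 - p 1) + p 1
        field_simp
        linear_combination h
    · refine key ((y 1 - p 1) / (q 1 - p 1)) ?_
      intro i
      fin_cases i
      · show y 0 = (y 1 - p 1) / (q 1 - p 1) * (q 0 - p 0) + p 0
        field_simp
        linear_combination -h
      · show y 1 = (y 1 - p 1) / (q 1 - p 1) * (q 1 - p 1) + p 1
        field_simp
        ring

/-- Convex-combination representation for membership in the hull of three points. -/
lemma hull3_rep {x y z w : Pt} (h : w ∈ convexHull ℝ ({x, y, z} : Set Pt)) :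
    ∃ α β γ : ℝ, 0 ≤ α ∧ 0 ≤ β ∧ 0 ≤ γ ∧ α + β + γ = 1 ∧ α • x + β • y + γ • z = w := by
  rw [convexHull_insert (by exact ⟨y, by simp⟩), mem_convexJoin] at h
  obtain ⟨x', hx', z', hz', hw⟩ := h
  have hx'' : x' = x := by simpa using hx'
  subst hx''
  rw [convexHull_pair] at hz'
  obtain ⟨β', γ', hβ', hγ', hsum, rfl⟩ := hz'
  obtain ⟨α, δ, hα, hδ, hαδ, hw⟩ := hw
  refine ⟨α, δ * β', δ * γ', hα, by positivity, by positivity, by nlinarith, ?_⟩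
  rw [← hw]
  rw [smul_add, smul_smul, smul_smul]
  abel

/-- A point of the hull of `{x,p,q}` not on line `(p,q)` has the same
`det2 p q` sign as `x`. -/
lemma hull_sign {x p q w : Pt} (h : w ∈ convexHull ℝ ({x, p, q} : Set Pt))
    (hw : det2 p q w ≠ 0) (hx : det2 p q x ≠ 0) :
    0 < det2 p q w * det2 p q x := by
  obtain ⟨α, β, γ, hα, hβ, hγ, hsum, hcomb⟩ := hull3_rep h
  have hval : det2 p q w = α * det2 p q x := by
    rw [← hcomb, det2_comb3 _ _ _ _ _ _ _ _ hsum, det2_self₁, det2_self₂]; ring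
  have hx2 : 0 < det2 p q x ^ 2 := by positivity
  have hα' : 0 < α := by
    rcases lt_or_eq_of_le hα with h' | h'
    · exact h'
    · exfalso; apply hw; rw [hval, ← h']; ring
  rw [hval]
  nlinarith

/-- Master disjointness lemma 1 : an open segment whose endpoints have (weakly)
the same non-zero `det2 p q` sign is disjoint from the open segment `(p,q)`. -/
lemma disj_of_side {p q u v : Pt} (hu : det2 p q u ≠ 0)
    (huv : 0 ≤ det2 p q u * det2 p q v) :
    openSegment ℝ u v ∩ openSegment ℝ p q = ∅ := by
  ext z
  simp only [Set.mem_inter_iff, Set.mem_empty_iff_false, iff_false, not_and]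
  rintro ⟨t, s, ht, hs, hts, rfl⟩ ⟨t', s', ht', hs', hts', hz⟩
  have e1 : det2 p q (t • u + s • v) = t * det2 p q u + s * det2 p q v :=
    det2_comb2 _ _ _ _ _ _ hts
  have e2 : det2 p q (t • u + s • v) = 0 := by
    rw [← hz, det2_comb2 _ _ _ _ _ _ hts', det2_self₁, det2_self₂]; ring
  have h3 : t * det2 p q u + s * det2 p q v = 0 := by rw [← e1, e2]
  have hu2 : 0 < det2 p q u ^ 2 := by positivity
  have h4 : t * det2 p q u ^ 2 + s * (det2 p q u * det2 p q v) = 0 := by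
    linear_combination (det2 p q u) * h3
  linarith [mul_pos ht hu2, mul_nonneg hs.le huv]

/-- Master disjointness lemma 2 : two open segments on strictly opposite sides. -/
lemma disj_of_opp {p q u v u' v' : Pt} (hu : det2 p q u ≠ 0) (hu' : det2 p q u' ≠ 0)
    (huv : 0 ≤ det2 p q u * det2 p q v) (hu'v' : 0 ≤ det2 p q u' * det2 p q v')
    (hopp : det2 p q u * det2 p q u' < 0) :
    openSegment ℝ u v ∩ openSegment ℝ u' v' = ∅ := by
  ext z
  simp only [Set.mem_inter_iff, Set.mem_empty_iff_false, iff_false, not_and]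
  rintro ⟨t, s, ht, hs, hts, rfl⟩ ⟨t', s', ht', hs', hts', hz⟩
  have e1 : det2 p q (t • u + s • v) = t * det2 p q u + s * det2 p q v :=
    det2_comb2 _ _ _ _ _ _ hts
  have e2 : det2 p q (t • u + s • v) = t' * det2 p q u' + s' * det2 p q v' := by
    rw [← hz, det2_comb2 _ _ _ _ _ _ hts']
  set D := det2 p q (t • u + s • v) with hD
  have hu2 : 0 < det2 p q u ^ 2 := by positivity
  have hu'2 : 0 < det2 p q u' ^ 2 := by positivity
  have hpos1 : 0 < D * det2 p q u := by
    rw [e1]; nlinarith [mul_pos ht hu2, mul_nonneg hs.le huv]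
  have hpos2 : 0 < D * det2 p q u' := by
    rw [e2]; nlinarith [mul_pos ht' hu'2, mul_nonneg hs'.le hu'v']
  nlinarith [mul_pos hpos1 hpos2, sq_nonneg D]

/-- Edges sharing a vertex never cross. -/
lemma not_cross_of_common {e f : Sym2 Pt} {v : Pt} (hv : v ∈ e) (hv' : v ∈ f) :
    ¬ Cross e f := by
  rintro ⟨a, b, c, d, rfl, rfl, h1, h2, h3, h4, -⟩
  rw [Sym2.mem_iff] at hv hv'
  rcases hv with rfl | rfl <;> rcases hv' with h | h <;> simp_all

/-- If the open segments are disjoint, the edges do not cross. -/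
lemma not_cross_of_disj {x y u v : Pt}
    (h : openSegment ℝ x y ∩ openSegment ℝ u v = ∅) :
    ¬ Cross s(x, y) s(u, v) := by
  rintro ⟨a, b, c, d, he, hf, -, -, -, -, z, hz1, hz2⟩
  have hab : openSegment ℝ a b = openSegment ℝ x y := by
    rcases Sym2.eq_iff.mp he with ⟨rfl, rfl⟩ | ⟨rfl, rfl⟩
    · rfl
    · exact openSegment_symm ℝ _ _
  have hcd : openSegment ℝ c d = openSegment ℝ u v := by
    rcases Sym2.eq_iff.mp hf with ⟨rfl, rfl⟩ | ⟨rfl, rfl⟩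
    · rfl
    · exact openSegment_symm ℝ _ _
  have : z ∈ openSegment ℝ x y ∩ openSegment ℝ u v := ⟨hab ▸ hz1, hcd ▸ hz2⟩
  rw [h] at this
  exact this

lemma not_cross_of_disj' {x y u v : Pt}
    (h : openSegment ℝ u v ∩ openSegment ℝ x y = ∅) :
    ¬ Cross s(x, y) s(u, v) :=
  not_cross_of_disj (by rw [Set.inter_comm]; exact h)

lemma triple_comm₁ (p q x : Pt) : ({p, q, x} : Set Pt) = {q, p, x} := by
  ext y; simp; tauto

lemma triple_comm₂ (p q x : Pt) : ({p, q, x} : Set Pt) = {x, p, q} := by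
  ext y; simp; tauto

end FCaux

namespace FCaux2
open FCaux

section Sep

variable {B₁ B₂ B₃ B₄ : Finset Pt}
variable (h12 : Disjoint B₁ B₂) (h13 : Disjoint B₁ B₃) (h14 : Disjoint B₁ B₄)
variable (h23 : Disjoint B₂ B₃) (h24 : Disjoint B₂ B₄) (h34 : Disjoint B₃ B₄)
variable (hgp : GenPos ((B₁ : Set Pt) ∪ ↑B₂ ∪ ↑B₃ ∪ ↑B₄))
variable (hhull : ∀ p₁ ∈ B₁, ∀ p₂ ∈ B₂, ∀ p₃ ∈ B₃, ∀ p₄ ∈ B₄,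
      p₄ ∈ convexHull ℝ ({p₁, p₂, p₃} : Set Pt))

lemma memU1 {x : Pt} (h : x ∈ B₁) : x ∈ ((B₁ : Set Pt) ∪ ↑B₂ ∪ ↑B₃ ∪ ↑B₄) := by
  simp [h]
lemma memU2 {x : Pt} (h : x ∈ B₂) : x ∈ ((B₁ : Set Pt) ∪ ↑B₂ ∪ ↑B₃ ∪ ↑B₄) := by
  simp [h]
lemma memU3 {x : Pt} (h : x ∈ B₃) : x ∈ ((B₁ : Set Pt) ∪ ↑B₂ ∪ ↑B₃ ∪ ↑B₄) := by
  simp [h]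
lemma memU4 {x : Pt} (h : x ∈ B₄) : x ∈ ((B₁ : Set Pt) ∪ ↑B₂ ∪ ↑B₃ ∪ ↑B₄) := by
  simp [h]

lemma neOf {x y : Pt} {S T : Finset Pt} (hd : Disjoint S T) (hx : x ∈ S) (hy : y ∈ T) :
    x ≠ y := by
  rintro rfl
  exact (Finset.disjoint_left.mp hd hx) hy

include hgp in
lemma hdet : ∀ {x y z : Pt}, x ∈ ((B₁ : Set Pt) ∪ ↑B₂ ∪ ↑B₃ ∪ ↑B₄) →
    y ∈ ((B₁ : Set Pt) ∪ ↑B₂ ∪ ↑B₃ ∪ ↑B₄) → z ∈ ((B₁ : Set Pt) ∪ ↑B₂ ∪ ↑B₃ ∪ ↑B₄) →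
    x ≠ y → x ≠ z → y ≠ z → det2 x y z ≠ 0 := by
  intro x y z hx hy hz hxy hxz hyz h0
  exact hgp x hx y hy z hz hxy hxz hyz (collinear_of_det2 hxy h0)

include h12 h13 h14 h23 h24 h34 hgp hhull in
/-- All points of `B₁ ∪ B₄` are strictly on the same side of any line through a
point of `B₂` and a point of `B₃`. -/
lemma sep23 (hne1 : B₁.Nonempty) (hne4 : B₄.Nonempty)
    {p q u v : Pt} (hp : p ∈ B₂) (hq : q ∈ B₃)
    (hu : u ∈ B₁ ∨ u ∈ B₄) (hv : v ∈ B₁ ∨ v ∈ B₄) :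
    0 < det2 p q u * det2 p q v := by
  obtain ⟨a₀, ha₀⟩ := hne1
  obtain ⟨e₀, he₀⟩ := hne4
  have hd : ∀ x, (x ∈ B₁ ∨ x ∈ B₄) → det2 p q x ≠ 0 := by
    rintro x (hx | hx)
    · exact hdet hgp (memU2 hp) (memU3 hq) (memU1 hx)
        (neOf h23 hp hq) ((neOf h12 hx hp).symm) ((neOf h13 hx hq).symm)
    · exact hdet hgp (memU2 hp) (memU3 hq) (memU4 hx)
        (neOf h23 hp hq) ((neOf h24 hp hx)) ((neOf h34 hq hx))
  have hda₀ : det2 p q a₀ ≠ 0 := hd a₀ (Or.inl ha₀)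
  have hde₀ : det2 p q e₀ ≠ 0 := hd e₀ (Or.inr he₀)
  have key : ∀ x, (x ∈ B₁ ∨ x ∈ B₄) → 0 < det2 p q x * det2 p q e₀ := by
    rintro x (hx | hx)
    · have h' := hull_sign (hhull x hx p hp q hq e₀ he₀) hde₀ (hd x (Or.inl hx))
      nlinarith [h']
    · have h1 := hull_sign (hhull a₀ ha₀ p hp q hq x hx) (hd x (Or.inr hx)) hda₀
      have h2 := hull_sign (hhull a₀ ha₀ p hp q hq e₀ he₀) hde₀ hda₀
      nlinarith [mul_pos h1 h2, pow_two_pos_of_ne_zero hda₀]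
  nlinarith [mul_pos (key u hu) (key v hv), pow_two_pos_of_ne_zero hde₀]

include h12 h13 h14 h23 h24 h34 hgp hhull in
/-- All points of `B₂ ∪ B₄` are strictly on the same side of any line through a
point of `B₁` and a point of `B₃`. -/
lemma sep13 (hne2 : B₂.Nonempty) (hne4 : B₄.Nonempty)
    {p q u v : Pt} (hp : p ∈ B₁) (hq : q ∈ B₃)
    (hu : u ∈ B₂ ∨ u ∈ B₄) (hv : v ∈ B₂ ∨ v ∈ B₄) :
    0 < det2 p q u * det2 p q v := by
  obtain ⟨b₀, hb₀⟩ := hne2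
  obtain ⟨e₀, he₀⟩ := hne4
  have hd : ∀ x, (x ∈ B₂ ∨ x ∈ B₄) → det2 p q x ≠ 0 := by
    rintro x (hx | hx)
    · exact hdet hgp (memU1 hp) (memU3 hq) (memU2 hx)
        (neOf h13 hp hq) (neOf h12 hp hx) ((neOf h23 hx hq).symm)
    · exact hdet hgp (memU1 hp) (memU3 hq) (memU4 hx)
        (neOf h13 hp hq) (neOf h14 hp hx) (neOf h34 hq hx)
  have hdb₀ : det2 p q b₀ ≠ 0 := hd b₀ (Or.inl hb₀)
  have hde₀ : det2 p q e₀ ≠ 0 := hd e₀ (Or.inr he₀)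
  have key : ∀ x, (x ∈ B₂ ∨ x ∈ B₄) → 0 < det2 p q x * det2 p q e₀ := by
    rintro x (hx | hx)
    · have hh := hhull p hp x hx q hq e₀ he₀
      rw [triple_comm₁] at hh
      have h' := hull_sign hh hde₀ (hd x (Or.inl hx))
      nlinarith [h']
    · have hh1 := hhull p hp b₀ hb₀ q hq x hx
      rw [triple_comm₁] at hh1
      have h1 := hull_sign hh1 (hd x (Or.inr hx)) hdb₀
      have hh2 := hhull p hp b₀ hb₀ q hq e₀ he₀
      rw [triple_comm₁] at hh2
      have h2 := hull_sign hh2 hde₀ hdb₀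
      nlinarith [mul_pos h1 h2, pow_two_pos_of_ne_zero hdb₀]
  nlinarith [mul_pos (key u hu) (key v hv), pow_two_pos_of_ne_zero hde₀]

include h12 h13 h14 h23 h24 h34 hgp hhull in
/-- All points of `B₃ ∪ B₄` are strictly on the same side of any line through a
point of `B₁` and a point of `B₂`. -/
lemma sep12 (hne3 : B₃.Nonempty) (hne4 : B₄.Nonempty)
    {p q u v : Pt} (hp : p ∈ B₁) (hq : q ∈ B₂)
    (hu : u ∈ B₃ ∨ u ∈ B₄) (hv : v ∈ B₃ ∨ v ∈ B₄) :
    0 < det2 p q u * det2 p q v := by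
  obtain ⟨c₀, hc₀⟩ := hne3
  obtain ⟨e₀, he₀⟩ := hne4
  have hd : ∀ x, (x ∈ B₃ ∨ x ∈ B₄) → det2 p q x ≠ 0 := by
    rintro x (hx | hx)
    · exact hdet hgp (memU1 hp) (memU2 hq) (memU3 hx)
        (neOf h12 hp hq) (neOf h13 hp hx) (neOf h23 hq hx)
    · exact hdet hgp (memU1 hp) (memU2 hq) (memU4 hx)
        (neOf h12 hp hq) (neOf h14 hp hx) (neOf h24 hq hx)
  have hdc₀ : det2 p q c₀ ≠ 0 := hd c₀ (Or.inl hc₀)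
  have hde₀ : det2 p q e₀ ≠ 0 := hd e₀ (Or.inr he₀)
  have key : ∀ x, (x ∈ B₃ ∨ x ∈ B₄) → 0 < det2 p q x * det2 p q e₀ := by
    rintro x (hx | hx)
    · have hh := hhull p hp q hq x hx e₀ he₀
      rw [triple_comm₂] at hh
      have h' := hull_sign hh hde₀ (hd x (Or.inl hx))
      nlinarith [h']
    · have hh1 := hhull p hp q hq c₀ hc₀ x hx
      rw [triple_comm₂] at hh1
      have h1 := hull_sign hh1 (hd x (Or.inr hx)) hdc₀
      have hh2 := hhull p hp q hq c₀ hc₀ e₀ he₀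
      rw [triple_comm₂] at hh2
      have h2 := hull_sign hh2 hde₀ hdc₀
      nlinarith [mul_pos h1 h2, pow_two_pos_of_ne_zero hdc₀]
  nlinarith [mul_pos (key u hu) (key v hv), pow_two_pos_of_ne_zero hde₀]

include h12 h13 h14 h23 h24 h34 hgp hhull in
/-- A line through a point of `B₁` and a point of `B₄` strictly separates `B₂`
from `B₃`. -/
lemma sepM {a w b c : Pt} (ha : a ∈ B₁) (hw : w ∈ B₄) (hb : b ∈ B₂) (hc : c ∈ B₃) :
    det2 a w b * det2 a w c < 0 := by
  have haw : a ≠ w := neOf h14 ha hw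
  have hdb : det2 a w b ≠ 0 :=
    hdet hgp (memU1 ha) (memU4 hw) (memU2 hb) haw (neOf h12 ha hb)
      ((neOf h24 hb hw).symm)
  have hdc : det2 a w c ≠ 0 :=
    hdet hgp (memU1 ha) (memU4 hw) (memU3 hc) haw (neOf h13 ha hc)
      ((neOf h34 hc hw).symm)
  obtain ⟨α, β, γ, hα, hβ, hγ, hsum, hcomb⟩ := hull3_rep (hhull a ha b hb c hc w hw)
  have hval : 0 = α * det2 a w a + β * det2 a w b + γ * det2 a w c := by
    rw [← det2_comb3 a w a b c α β γ hsum, hcomb, det2_self₂]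
  rw [det2_self₁] at hval
  have hval' : 0 = β * det2 a w b + γ * det2 a w c := by linarith
  have hβ' : 0 < β := by
    rcases lt_or_eq_of_le hβ with h' | h'
    · exact h'
    · exfalso
      rw [← h', zero_mul, zero_add] at hval'
      have hγ' : γ = 0 := by
        rcases mul_eq_zero.mp hval'.symm with h'' | h''
        · exact h''
        · exact absurd h'' hdc
      have hα1 : α = 1 := by linarith
      apply haw
      rw [← hcomb, hα1, ← h', hγ']
      simp
  have hγ'' : 0 < γ := by
    rcases lt_or_eq_of_le hγ with h' | h'
    · exact h'
    · exfalso
      rw [← h', zero_mul, add_zero] at hval'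
      have hβ'' : β = 0 := by
        rcases mul_eq_zero.mp hval'.symm with h'' | h''
        · exact h''
        · exact absurd h'' hdb
      exact absurd hβ'' (by linarith)
  have h4 : β * det2 a w b ^ 2 + γ * (det2 a w b * det2 a w c) = 0 := by
    linear_combination (-(det2 a w b)) * hval'
  nlinarith [mul_pos hβ' (pow_two_pos_of_ne_zero hdb), hγ'']

include h12 h13 h14 h23 h24 h34 hgp hhull in
lemma sepM_bb (hne3 : B₃.Nonempty) {a w b b' : Pt}
    (ha : a ∈ B₁) (hw : w ∈ B₄) (hb : b ∈ B₂) (hb' : b' ∈ B₂) :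
    0 < det2 a w b * det2 a w b' := by
  obtain ⟨c₀, hc₀⟩ := hne3
  have h1 := sepM h12 h13 h14 h23 h24 h34 hgp hhull ha hw hb hc₀
  have h2 := sepM h12 h13 h14 h23 h24 h34 hgp hhull ha hw hb' hc₀
  have hdc : det2 a w c₀ ≠ 0 :=
    hdet hgp (memU1 ha) (memU4 hw) (memU3 hc₀) (neOf h14 ha hw) (neOf h13 ha hc₀)
      ((neOf h34 hc₀ hw).symm)
  nlinarith [mul_pos_of_neg_of_neg h1 h2, pow_two_pos_of_ne_zero hdc]

include h12 h13 h14 h23 h24 h34 hgp hhull in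
lemma sepM_cc (hne2 : B₂.Nonempty) {a w c c' : Pt}
    (ha : a ∈ B₁) (hw : w ∈ B₄) (hc : c ∈ B₃) (hc' : c' ∈ B₃) :
    0 < det2 a w c * det2 a w c' := by
  obtain ⟨b₀, hb₀⟩ := hne2
  have h1 := sepM h12 h13 h14 h23 h24 h34 hgp hhull ha hw hb₀ hc
  have h2 := sepM h12 h13 h14 h23 h24 h34 hgp hhull ha hw hb₀ hc'
  have hdb : det2 a w b₀ ≠ 0 :=
    hdet hgp (memU1 ha) (memU4 hw) (memU2 hb₀) (neOf h14 ha hw) (neOf h12 ha hb₀)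
      ((neOf h24 hb₀ hw).symm)
  nlinarith [mul_pos_of_neg_of_neg h1 h2, pow_two_pos_of_ne_zero hdb]

end Sep
end FCaux2


namespace FCmain
open FCaux FCaux2

/-- The star with center `u` and leaf set `S`. -/
def star2 (u : Pt) (S : Set Pt) : Set (Sym2 Pt) := {e | ∃ x ∈ S, e = s(u, x)}

lemma plane_union {u₁ u₂ : Pt} {S₁ S₂ : Set Pt}
    (hdisj : ∀ x ∈ S₁, ∀ y ∈ S₂,
      openSegment ℝ u₁ x ∩ openSegment ℝ u₂ y = ∅) :
    PlaneEdges (star2 u₁ S₁ ∪ star2 u₂ S₂) := by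
  rintro e (⟨x, hx, rfl⟩ | ⟨x, hx, rfl⟩) f (⟨y, hy, rfl⟩ | ⟨y, hy, rfl⟩)
  · exact not_cross_of_common (Sym2.mem_iff.mpr (Or.inl rfl))
      (Sym2.mem_iff.mpr (Or.inl rfl))
  · exact not_cross_of_disj (hdisj x hx y hy)
  · exact not_cross_of_disj' (hdisj y hy x hx)
  · exact not_cross_of_common (Sym2.mem_iff.mpr (Or.inl rfl))
      (Sym2.mem_iff.mpr (Or.inl rfl))

lemma forest_union {u₁ u₂ : Pt} {S₁ S₂ : Set Pt}
    (h : ∀ v : Pt, (v = u₁ ∨ v ∈ S₁) → (v = u₂ ∨ v ∈ S₂) → False) :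
    AtMostTwoStarForest (star2 u₁ S₁ ∪ star2 u₂ S₂) := by
  refine ⟨star2 u₁ S₁, star2 u₂ S₂, rfl, ⟨u₁, ?_⟩, ⟨u₂, ?_⟩, ?_⟩
  · rintro e ⟨x, hx, rfl⟩
    exact Sym2.mem_iff.mpr (Or.inl rfl)
  · rintro e ⟨x, hx, rfl⟩
    exact Sym2.mem_iff.mpr (Or.inl rfl)
  · rintro e ⟨x, hx, rfl⟩ f ⟨y, hy, rfl⟩ v hv hv'
    rw [Sym2.mem_iff] at hv hv'
    refine h v ?_ ?_
    · rcases hv with rfl | rfl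
      · exact Or.inl rfl
      · exact Or.inr hx
    · rcases hv' with rfl | rfl
      · exact Or.inl rfl
      · exact Or.inr hy

end FCmain

open FCaux FCaux2 FCmain

/-- If `B = B₁ ∪ B₂ ∪ B₃ ∪ B₄` consists of four disjoint `m`-point sets in general
position such that every `p₄ ∈ B₄` lies in the convex hull of every choice
`p₁ ∈ B₁, p₂ ∈ B₂, p₃ ∈ B₃`, then the complete geometric graph on `B` can be
partitioned into at most `3m` plane subgraphs, each a plane star forest consisting
of at most two stars. -/
theorem four_clusters_partition (m : ℕ) (hm : 0 < m) (B₁ B₂ B₃ B₄ : Finset Pt)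
    (h12 : Disjoint B₁ B₂) (h13 : Disjoint B₁ B₃) (h14 : Disjoint B₁ B₄)
    (h23 : Disjoint B₂ B₃) (h24 : Disjoint B₂ B₄) (h34 : Disjoint B₃ B₄)
    (hc1 : B₁.card = m) (hc2 : B₂.card = m) (hc3 : B₃.card = m) (hc4 : B₄.card = m)
    (hgp : GenPos ((B₁ : Set Pt) ∪ ↑B₂ ∪ ↑B₃ ∪ ↑B₄))
    (hhull : ∀ p₁ ∈ B₁, ∀ p₂ ∈ B₂, ∀ p₃ ∈ B₃, ∀ p₄ ∈ B₄,
      p₄ ∈ convexHull ℝ ({p₁, p₂, p₃} : Set Pt)) :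
    ∃ F : Fin (3 * m) → Set (Sym2 Pt),
      IsPartitionInto ((B₁ : Set Pt) ∪ ↑B₂ ∪ ↑B₃ ∪ ↑B₄) (3 * m) F ∧
      ∀ i, PlaneEdges (F i) ∧ AtMostTwoStarForest (F i) := by
  classical
  have hne1 : B₁.Nonempty := Finset.card_pos.mp (by omega)
  have hne2 : B₂.Nonempty := Finset.card_pos.mp (by omega)
  have hne3 : B₃.Nonempty := Finset.card_pos.mp (by omega)
  have hne4 : B₄.Nonempty := Finset.card_pos.mp (by omega)
  let eA : {x // x ∈ B₁} ≃ Fin m := B₁.equivFinOfCardEq hc1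
  let eB : {x // x ∈ B₂} ≃ Fin m := B₂.equivFinOfCardEq hc2
  let eC : {x // x ∈ B₃} ≃ Fin m := B₃.equivFinOfCardEq hc3
  let eD : {x // x ∈ B₄} ≃ Fin m := B₄.equivFinOfCardEq hc4
  let a : Fin m → Pt := fun k => (eA.symm k : Pt)
  let b : Fin m → Pt := fun k => (eB.symm k : Pt)
  let c : Fin m → Pt := fun k => (eC.symm k : Pt)
  let d : Fin m → Pt := fun k => (eD.symm k : Pt)
  have aMem : ∀ k, a k ∈ B₁ := fun k => (eA.symm k).2
  have bMem : ∀ k, b k ∈ B₂ := fun k => (eB.symm k).2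
  have cMem : ∀ k, c k ∈ B₃ := fun k => (eC.symm k).2
  have dMem : ∀ k, d k ∈ B₄ := fun k => (eD.symm k).2
  have aInj : Function.Injective a := fun k₁ k₂ h => eA.symm.injective (Subtype.ext h)
  have bInj : Function.Injective b := fun k₁ k₂ h => eB.symm.injective (Subtype.ext h)
  have cInj : Function.Injective c := fun k₁ k₂ h => eC.symm.injective (Subtype.ext h)
  have dInj : Function.Injective d := fun k₁ k₂ h => eD.symm.injective (Subtype.ext h)
  have aSurj : ∀ x ∈ B₁, ∃ k, a k = x := fun x hx => ⟨eA ⟨x, hx⟩, by simp [a]⟩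
  have bSurj : ∀ x ∈ B₂, ∃ k, b k = x := fun x hx => ⟨eB ⟨x, hx⟩, by simp [b]⟩
  have cSurj : ∀ x ∈ B₃, ∃ k, c k = x := fun x hx => ⟨eC ⟨x, hx⟩, by simp [c]⟩
  have dSurj : ∀ x ∈ B₄, ∃ k, d k = x := fun x hx => ⟨eD ⟨x, hx⟩, by simp [d]⟩
  -- leaf sets
  let SA : Fin m → Set Pt := fun k => {x | ∃ j, k < j ∧ x = a j} ∪ ↑B₄
  let SB : Fin m → Set Pt := fun k => {x | ∃ j, k < j ∧ x = b j} ∪ ↑B₄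
  let SC : Fin m → Set Pt := fun k => {x | ∃ j, k < j ∧ x = c j} ∪ ↑B₁
  let SD : Fin m → Set Pt := fun k => (↑B₃ : Set Pt) ∪ {x | ∃ j, k < j ∧ x = d j}
  have SAmem : ∀ k x, x ∈ SA k ↔ ((∃ j, k < j ∧ x = a j) ∨ x ∈ B₄) := fun k x => Iff.rfl
  have SBmem : ∀ k x, x ∈ SB k ↔ ((∃ j, k < j ∧ x = b j) ∨ x ∈ B₄) := fun k x => Iff.rfl
  have SCmem : ∀ k x, x ∈ SC k ↔ ((∃ j, k < j ∧ x = c j) ∨ x ∈ B₁) := fun k x => Iff.rfl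
  have SDmem : ∀ k x, x ∈ SD k ↔ (x ∈ B₃ ∨ (∃ j, k < j ∧ x = d j)) := fun k x => Iff.rfl
  -- the classes
  let G : Fin 3 → Fin m → Set (Sym2 Pt) := fun t k =>
    if t.val = 0 then star2 (a k) (SA k) ∪ star2 (b k) (↑B₃)
    else if t.val = 1 then star2 (b k) (SB k) ∪ star2 (c k) (SC k)
    else star2 (d k) (SD k) ∪ star2 (a k) (↑B₂)
  let F : Fin (3 * m) → Set (Sym2 Pt) := fun i =>
    G (finProdFinEquiv.symm i).1 (finProdFinEquiv.symm i).2
  have hG0 : ∀ (t : Fin 3), t.val = 0 → ∀ k,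
      G t k = star2 (a k) (SA k) ∪ star2 (b k) (↑B₃) := by
    intro t ht k; simp [G, show t = 0 from Fin.ext ht]
  have hG1 : ∀ (t : Fin 3), t.val = 1 → ∀ k,
      G t k = star2 (b k) (SB k) ∪ star2 (c k) (SC k) := by
    intro t ht k; simp [G, show t = 1 from Fin.ext ht]
  have hG2 : ∀ (t : Fin 3), t.val = 2 → ∀ k,
      G t k = star2 (d k) (SD k) ∪ star2 (a k) (↑B₂) := by
    intro t ht k; simp [G, show t = 2 from Fin.ext ht]
  -- anchors
  let k0 : Fin m := ⟨0, hm⟩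
  -- distinctness helpers
  have clash : ∀ {v : Pt} {S T : Finset Pt}, Disjoint S T → v ∈ S → v ∈ T → False :=
    fun hd hv hv' => (Finset.disjoint_left.mp hd hv) hv'
  -- geometric disjointness of the two stars in each class
  have geo0 : ∀ k, ∀ x ∈ SA k, ∀ y ∈ (↑B₃ : Set Pt),
      openSegment ℝ (a k) x ∩ openSegment ℝ (b k) y = ∅ := by
    intro k x hx y hy
    have hy' : y ∈ B₃ := hy
    have hx' : x ∈ B₁ ∨ x ∈ B₄ := by
      rcases hx with ⟨j, _, rfl⟩ | hx4
      · exact Or.inl (aMem j)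
      · exact Or.inr hx4
    have hpos := sep23 h12 h13 h14 h23 h24 h34 hgp hhull hne1 hne4 (bMem k) hy'
      (Or.inl (aMem k)) hx'
    have hne : det2 (b k) y (a k) ≠ 0 := by
      intro h0; rw [h0, zero_mul] at hpos; exact lt_irrefl 0 hpos
    exact disj_of_side hne hpos.le
  have geo2 : ∀ k, ∀ x ∈ SD k, ∀ y ∈ (↑B₂ : Set Pt),
      openSegment ℝ (d k) x ∩ openSegment ℝ (a k) y = ∅ := by
    intro k x hx y hy
    have hy' : y ∈ B₂ := hy
    have hx' : x ∈ B₃ ∨ x ∈ B₄ := by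
      rcases hx with hx3 | ⟨j, _, rfl⟩
      · exact Or.inl hx3
      · exact Or.inr (dMem j)
    have hpos := sep12 h12 h13 h14 h23 h24 h34 hgp hhull hne3 hne4 (aMem k) hy'
      (Or.inr (dMem k)) hx'
    have hne : det2 (a k) y (d k) ≠ 0 := by
      intro h0; rw [h0, zero_mul] at hpos; exact lt_irrefl 0 hpos
    exact disj_of_side hne hpos.le
  have geo1 : ∀ k, ∀ x ∈ SB k, ∀ y ∈ SC k,
      openSegment ℝ (b k) x ∩ openSegment ℝ (c k) y = ∅ := by
    intro k x hx y hy
    rcases hy with ⟨j', hj', rfl⟩ | hy1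
    · -- y = c j' : use the pencil line through a k0 and a point of B₄
      rcases hx with ⟨j, hj, rfl⟩ | hx4
      · -- x = b j
        have h1 := sepM_bb h12 h13 h14 h23 h24 h34 hgp hhull hne3
          (aMem k0) (dMem k0) (bMem k) (bMem j)
        have h2 := sepM_cc h12 h13 h14 h23 h24 h34 hgp hhull hne2
          (aMem k0) (dMem k0) (cMem k) (cMem j')
        have h3 := sepM h12 h13 h14 h23 h24 h34 hgp hhull
          (aMem k0) (dMem k0) (bMem k) (cMem k)
        have hbne : det2 (a k0) (d k0) (b k) ≠ 0 := by
          intro h0; rw [h0, zero_mul] at h1; exact lt_irrefl 0 h1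
        have hcne : det2 (a k0) (d k0) (c k) ≠ 0 := by
          intro h0; rw [h0, zero_mul] at h2; exact lt_irrefl 0 h2
        exact disj_of_opp hbne hcne h1.le h2.le h3
      · -- x ∈ B₄ : use the line through a k0 and x itself
        have h2 := sepM_cc h12 h13 h14 h23 h24 h34 hgp hhull hne2
          (aMem k0) hx4 (cMem k) (cMem j')
        have h3 := sepM h12 h13 h14 h23 h24 h34 hgp hhull
          (aMem k0) hx4 (bMem k) (cMem k)
        have hbne : det2 (a k0) x (b k) ≠ 0 := by
          intro h0; rw [h0, zero_mul] at h3; exact lt_irrefl 0 h3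
        have hcne : det2 (a k0) x (c k) ≠ 0 := by
          intro h0; rw [h0, zero_mul] at h2; exact lt_irrefl 0 h2
        have huv : 0 ≤ det2 (a k0) x (b k) * det2 (a k0) x x := by
          rw [det2_self₂, mul_zero]
        exact disj_of_opp hbne hcne huv h2.le h3
    · -- y ∈ B₁
      have hx' : x ∈ B₂ ∨ x ∈ B₄ := by
        rcases hx with ⟨j, _, rfl⟩ | hx4
        · exact Or.inl (bMem j)
        · exact Or.inr hx4
      have hpos := sep13 h12 h13 h14 h23 h24 h34 hgp hhull hne2 hne4 hy1 (cMem k)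
        (Or.inl (bMem k)) hx'
      have hne : det2 y (c k) (b k) ≠ 0 := by
        intro h0; rw [h0, zero_mul] at hpos; exact lt_irrefl 0 hpos
      have hres := disj_of_side hne hpos.le
      rw [openSegment_symm ℝ y (c k)] at hres
      exact hres
  have memA : ∀ {x : Pt}, (x ∈ B₁ ∨ x ∈ B₂ ∨ x ∈ B₃ ∨ x ∈ B₄) →
      x ∈ ((B₁ : Set Pt) ∪ ↑B₂ ∪ ↑B₃ ∪ ↑B₄) := by
    intro x hx
    simp only [Set.mem_union, Finset.mem_coe]
    tauto
  have hsplit : ∀ z : Pt, z ∈ ((B₁ : Set Pt) ∪ ↑B₂ ∪ ↑B₃ ∪ ↑B₄) →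
      z ∈ B₁ ∨ z ∈ B₂ ∨ z ∈ B₃ ∨ z ∈ B₄ := by
    intro z hz
    simp only [Set.mem_union, Finset.mem_coe] at hz
    tauto
  have edgeMem : ∀ {u x : Pt}, (u ∈ B₁ ∨ u ∈ B₂ ∨ u ∈ B₃ ∨ u ∈ B₄) →
      (x ∈ B₁ ∨ x ∈ B₂ ∨ x ∈ B₃ ∨ x ∈ B₄) → u ≠ x →
      s(u, x) ∈ edges ((B₁ : Set Pt) ∪ ↑B₂ ∪ ↑B₃ ∪ ↑B₄) :=
    fun hu hx hne => ⟨_, memA hu, _, memA hx, hne, rfl⟩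
  have memF : ∀ (t : Fin 3) (k : Fin m) {q : Sym2 Pt}, q ∈ G t k → q ∈ ⋃ i, F i := by
    intro t k q hq
    refine Set.mem_iUnion.mpr ⟨finProdFinEquiv (t, k), ?_⟩
    simp only [F, Equiv.symm_apply_apply]
    exact hq
  refine ⟨F, ⟨?_, ?_⟩, ?_⟩
  · -- the union of the classes is the whole edge set
    apply Set.Subset.antisymm
    · intro q hq
      rw [Set.mem_iUnion] at hq
      obtain ⟨i, hqi⟩ := hq
      rcases hp : finProdFinEquiv.symm i with ⟨t, k⟩
      simp only [F, hp] at hqi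
      rcases t with ⟨tv, htv⟩
      interval_cases tv
      · rw [hG0 ⟨0, htv⟩ rfl k] at hqi
        rcases hqi with ⟨x, hx, rfl⟩ | ⟨y, hy, rfl⟩
        · rcases hx with ⟨j, hj, rfl⟩ | hx4
          · exact edgeMem (Or.inl (aMem k)) (Or.inl (aMem j))
              (fun h => (ne_of_lt hj) (aInj h))
          · exact edgeMem (Or.inl (aMem k)) (Or.inr (Or.inr (Or.inr hx4)))
              (neOf h14 (aMem k) hx4)
        · exact edgeMem (Or.inr (Or.inl (bMem k))) (Or.inr (Or.inr (Or.inl hy)))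
            (neOf h23 (bMem k) hy)
      · rw [hG1 ⟨1, htv⟩ rfl k] at hqi
        rcases hqi with ⟨x, hx, rfl⟩ | ⟨y, hy, rfl⟩
        · rcases hx with ⟨j, hj, rfl⟩ | hx4
          · exact edgeMem (Or.inr (Or.inl (bMem k))) (Or.inr (Or.inl (bMem j)))
              (fun h => (ne_of_lt hj) (bInj h))
          · exact edgeMem (Or.inr (Or.inl (bMem k))) (Or.inr (Or.inr (Or.inr hx4)))
              (neOf h24 (bMem k) hx4)
        · rcases hy with ⟨j, hj, rfl⟩ | hy1
          · exact edgeMem (Or.inr (Or.inr (Or.inl (cMem k)))) (Or.inr (Or.inr (Or.inl (cMem j))))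
              (fun h => (ne_of_lt hj) (cInj h))
          · exact edgeMem (Or.inr (Or.inr (Or.inl (cMem k)))) (Or.inl hy1)
              ((neOf h13 hy1 (cMem k)).symm)
      · rw [hG2 ⟨2, htv⟩ rfl k] at hqi
        rcases hqi with ⟨x, hx, rfl⟩ | ⟨y, hy, rfl⟩
        · rcases hx with hx3 | ⟨j, hj, rfl⟩
          · exact edgeMem (Or.inr (Or.inr (Or.inr (dMem k)))) (Or.inr (Or.inr (Or.inl hx3)))
              ((neOf h34 hx3 (dMem k)).symm)
          · exact edgeMem (Or.inr (Or.inr (Or.inr (dMem k)))) (Or.inr (Or.inr (Or.inr (dMem j))))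
              (fun h => (ne_of_lt hj) (dInj h))
        · exact edgeMem (Or.inl (aMem k)) (Or.inr (Or.inl hy))
            (neOf h12 (aMem k) hy)
    · rintro q ⟨x, hx, y, hy, hxy, rfl⟩
      have p11 : ∀ {x y : Pt}, x ∈ B₁ → y ∈ B₁ → x ≠ y → s(x, y) ∈ ⋃ i, F i := by
        intro x y hx hy hxy
        obtain ⟨i, rfl⟩ := aSurj x hx
        obtain ⟨j, rfl⟩ := aSurj y hy
        have hij : i ≠ j := fun h => hxy (by rw [h])
        rcases lt_or_gt_of_ne hij with h | h
        · refine memF ⟨0, by omega⟩ i ?_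
          rw [hG0 _ rfl i]
          exact Or.inl ⟨a j, Or.inl ⟨j, h, rfl⟩, rfl⟩
        · rw [Sym2.eq_swap]
          refine memF ⟨0, by omega⟩ j ?_
          rw [hG0 _ rfl j]
          exact Or.inl ⟨a i, Or.inl ⟨i, h, rfl⟩, rfl⟩
      have p22 : ∀ {x y : Pt}, x ∈ B₂ → y ∈ B₂ → x ≠ y → s(x, y) ∈ ⋃ i, F i := by
        intro x y hx hy hxy
        obtain ⟨i, rfl⟩ := bSurj x hx
        obtain ⟨j, rfl⟩ := bSurj y hy
        have hij : i ≠ j := fun h => hxy (by rw [h])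
        rcases lt_or_gt_of_ne hij with h | h
        · refine memF ⟨1, by omega⟩ i ?_
          rw [hG1 _ rfl i]
          exact Or.inl ⟨b j, Or.inl ⟨j, h, rfl⟩, rfl⟩
        · rw [Sym2.eq_swap]
          refine memF ⟨1, by omega⟩ j ?_
          rw [hG1 _ rfl j]
          exact Or.inl ⟨b i, Or.inl ⟨i, h, rfl⟩, rfl⟩
      have p33 : ∀ {x y : Pt}, x ∈ B₃ → y ∈ B₃ → x ≠ y → s(x, y) ∈ ⋃ i, F i := by
        intro x y hx hy hxy
        obtain ⟨i, rfl⟩ := cSurj x hx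
        obtain ⟨j, rfl⟩ := cSurj y hy
        have hij : i ≠ j := fun h => hxy (by rw [h])
        rcases lt_or_gt_of_ne hij with h | h
        · refine memF ⟨1, by omega⟩ i ?_
          rw [hG1 _ rfl i]
          exact Or.inr ⟨c j, Or.inl ⟨j, h, rfl⟩, rfl⟩
        · rw [Sym2.eq_swap]
          refine memF ⟨1, by omega⟩ j ?_
          rw [hG1 _ rfl j]
          exact Or.inr ⟨c i, Or.inl ⟨i, h, rfl⟩, rfl⟩
      have p44 : ∀ {x y : Pt}, x ∈ B₄ → y ∈ B₄ → x ≠ y → s(x, y) ∈ ⋃ i, F i := by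
        intro x y hx hy hxy
        obtain ⟨i, rfl⟩ := dSurj x hx
        obtain ⟨j, rfl⟩ := dSurj y hy
        have hij : i ≠ j := fun h => hxy (by rw [h])
        rcases lt_or_gt_of_ne hij with h | h
        · refine memF ⟨2, by omega⟩ i ?_
          rw [hG2 _ rfl i]
          exact Or.inl ⟨d j, Or.inr ⟨j, h, rfl⟩, rfl⟩
        · rw [Sym2.eq_swap]
          refine memF ⟨2, by omega⟩ j ?_
          rw [hG2 _ rfl j]
          exact Or.inl ⟨d i, Or.inr ⟨i, h, rfl⟩, rfl⟩
      have p12 : ∀ {x y : Pt}, x ∈ B₁ → y ∈ B₂ → s(x, y) ∈ ⋃ i, F i := by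
        intro x y hx hy
        obtain ⟨i, rfl⟩ := aSurj x hx
        refine memF ⟨2, by omega⟩ i ?_
        rw [hG2 _ rfl i]
        exact Or.inr ⟨y, hy, rfl⟩
      have p13 : ∀ {x y : Pt}, x ∈ B₁ → y ∈ B₃ → s(x, y) ∈ ⋃ i, F i := by
        intro x y hx hy
        obtain ⟨j, rfl⟩ := cSurj y hy
        rw [Sym2.eq_swap]
        refine memF ⟨1, by omega⟩ j ?_
        rw [hG1 _ rfl j]
        exact Or.inr ⟨x, Or.inr hx, rfl⟩
      have p14 : ∀ {x y : Pt}, x ∈ B₁ → y ∈ B₄ → s(x, y) ∈ ⋃ i, F i := by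
        intro x y hx hy
        obtain ⟨i, rfl⟩ := aSurj x hx
        refine memF ⟨0, by omega⟩ i ?_
        rw [hG0 _ rfl i]
        exact Or.inl ⟨y, Or.inr hy, rfl⟩
      have p23 : ∀ {x y : Pt}, x ∈ B₂ → y ∈ B₃ → s(x, y) ∈ ⋃ i, F i := by
        intro x y hx hy
        obtain ⟨i, rfl⟩ := bSurj x hx
        refine memF ⟨0, by omega⟩ i ?_
        rw [hG0 _ rfl i]
        exact Or.inr ⟨y, hy, rfl⟩
      have p24 : ∀ {x y : Pt}, x ∈ B₂ → y ∈ B₄ → s(x, y) ∈ ⋃ i, F i := by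
        intro x y hx hy
        obtain ⟨i, rfl⟩ := bSurj x hx
        refine memF ⟨1, by omega⟩ i ?_
        rw [hG1 _ rfl i]
        exact Or.inl ⟨y, Or.inr hy, rfl⟩
      have p34 : ∀ {x y : Pt}, x ∈ B₃ → y ∈ B₄ → s(x, y) ∈ ⋃ i, F i := by
        intro x y hx hy
        obtain ⟨j, rfl⟩ := dSurj y hy
        rw [Sym2.eq_swap]
        refine memF ⟨2, by omega⟩ j ?_
        rw [hG2 _ rfl j]
        exact Or.inl ⟨x, Or.inl hx, rfl⟩
      rcases hsplit x hx with h1 | h1 | h1 | h1 <;> rcases hsplit y hy with h2 | h2 | h2 | h2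
      · exact p11 h1 h2 hxy
      · exact p12 h1 h2
      · exact p13 h1 h2
      · exact p14 h1 h2
      · rw [Sym2.eq_swap]; exact p12 h2 h1
      · exact p22 h1 h2 hxy
      · exact p23 h1 h2
      · exact p24 h1 h2
      · rw [Sym2.eq_swap]; exact p13 h2 h1
      · rw [Sym2.eq_swap]; exact p23 h2 h1
      · exact p33 h1 h2 hxy
      · exact p34 h1 h2
      · rw [Sym2.eq_swap]; exact p14 h2 h1
      · rw [Sym2.eq_swap]; exact p24 h2 h1
      · rw [Sym2.eq_swap]; exact p34 h2 h1
      · exact p44 h1 h2 hxy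
  · -- pairwise disjointness of the classes
    have killA : ∀ {u v u' v' : Pt} (P : Pt → Prop), s(u, v) = s(u', v') →
        P u → P v → ¬ P u' → False := by
      intro u v u' v' P heq hu hv hu'
      rcases Sym2.eq_iff.mp heq with ⟨e1, e2⟩ | ⟨e1, e2⟩
      · exact hu' (e1 ▸ hu)
      · exact hu' (e2 ▸ hv)
    have killB : ∀ {u v u' v' : Pt} (P : Pt → Prop), s(u, v) = s(u', v') →
        P u → P v → ¬ P v' → False := by
      intro u v u' v' P heq hu hv hv'
      rcases Sym2.eq_iff.mp heq with ⟨e1, e2⟩ | ⟨e1, e2⟩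
      · exact hv' (e2 ▸ hv)
      · exact hv' (e1 ▸ hu)
    have notIn : ∀ {v : Pt} {S T U : Finset Pt}, Disjoint S U → Disjoint T U →
        v ∈ U → ¬(v ∈ S ∨ v ∈ T) := by
      intro v S T U hSU hTU hv h
      rcases h with h | h
      · exact clash hSU h hv
      · exact clash hTU h hv
    have supSA : ∀ {k x}, x ∈ SA k → (x ∈ B₁ ∨ x ∈ B₄) := by
      rintro k x (⟨j, _, rfl⟩ | h4)
      · exact Or.inl (aMem j)
      · exact Or.inr h4
    have supSB : ∀ {k x}, x ∈ SB k → (x ∈ B₂ ∨ x ∈ B₄) := by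
      rintro k x (⟨j, _, rfl⟩ | h4)
      · exact Or.inl (bMem j)
      · exact Or.inr h4
    have supSC : ∀ {k x}, x ∈ SC k → (x ∈ B₃ ∨ x ∈ B₁) := by
      rintro k x (⟨j, _, rfl⟩ | h1)
      · exact Or.inl (cMem j)
      · exact Or.inr h1
    have supSD : ∀ {k x}, x ∈ SD k → (x ∈ B₄ ∨ x ∈ B₃) := by
      rintro k x (h3 | ⟨j, _, rfl⟩)
      · exact Or.inr h3
      · exact Or.inl (dMem j)
    -- same-shape rigidity lemmas
    have keyX1 : ∀ {k k' : Fin m} {x x' : Pt}, x ∈ SA k → x' ∈ SA k' →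
        s(a k, x) = s(a k', x') → k = k' := by
      intro k k' x x' hx hx' heq
      rcases Sym2.eq_iff.mp heq with ⟨e1, e2⟩ | ⟨e1, e2⟩
      · exact aInj e1
      · exfalso
        rcases hx' with ⟨j', hj', rfl⟩ | h4'
        · rcases hx with ⟨j, hj, rfl⟩ | h4
          · have h1' : k' < k := by rw [← aInj e1] at hj'; exact hj'
            have h2' : k < k' := by rw [aInj e2] at hj; exact hj
            exact absurd h2' (not_lt.mpr h1'.le)
          · exact (neOf h14 (aMem k') h4) e2.symm
        · exact (neOf h14 (aMem k) h4') e1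
    have keyX2 : ∀ {k k' : Fin m} {y y' : Pt}, y ∈ B₃ → y' ∈ B₃ →
        s(b k, y) = s(b k', y') → k = k' := by
      intro k k' y y' hy hy' heq
      rcases Sym2.eq_iff.mp heq with ⟨e1, e2⟩ | ⟨e1, e2⟩
      · exact bInj e1
      · exact absurd e1 (neOf h23 (bMem k) hy')
    have keyY1 : ∀ {k k' : Fin m} {x x' : Pt}, x ∈ SB k → x' ∈ SB k' →
        s(b k, x) = s(b k', x') → k = k' := by
      intro k k' x x' hx hx' heq
      rcases Sym2.eq_iff.mp heq with ⟨e1, e2⟩ | ⟨e1, e2⟩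
      · exact bInj e1
      · exfalso
        rcases hx' with ⟨j', hj', rfl⟩ | h4'
        · rcases hx with ⟨j, hj, rfl⟩ | h4
          · have h1' : k' < k := by rw [← bInj e1] at hj'; exact hj'
            have h2' : k < k' := by rw [bInj e2] at hj; exact hj
            exact absurd h2' (not_lt.mpr h1'.le)
          · exact (neOf h24 (bMem k') h4) e2.symm
        · exact (neOf h24 (bMem k) h4') e1
    have keyY2 : ∀ {k k' : Fin m} {y y' : Pt}, y ∈ SC k → y' ∈ SC k' →
        s(c k, y) = s(c k', y') → k = k' := by
      intro k k' y y' hy hy' heq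
      rcases Sym2.eq_iff.mp heq with ⟨e1, e2⟩ | ⟨e1, e2⟩
      · exact cInj e1
      · exfalso
        rcases hy' with ⟨j', hj', rfl⟩ | h1'
        · rcases hy with ⟨j, hj, rfl⟩ | h1
          · have ha' : k' < k := by rw [← cInj e1] at hj'; exact hj'
            have hb' : k < k' := by rw [cInj e2] at hj; exact hj
            exact absurd hb' (not_lt.mpr ha'.le)
          · exact (neOf h13 h1 (cMem k')) e2
        · exact (neOf h13 h1' (cMem k)) e1.symm
    have keyZ1 : ∀ {k k' : Fin m} {x x' : Pt}, x ∈ SD k → x' ∈ SD k' →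
        s(d k, x) = s(d k', x') → k = k' := by
      intro k k' x x' hx hx' heq
      rcases Sym2.eq_iff.mp heq with ⟨e1, e2⟩ | ⟨e1, e2⟩
      · exact dInj e1
      · exfalso
        rcases hx' with h3' | ⟨j', hj', rfl⟩
        · exact (neOf h34 h3' (dMem k)) e1.symm
        · rcases hx with h3 | ⟨j, hj, rfl⟩
          · exact (neOf h34 h3 (dMem k')) e2
          · have ha' : k' < k := by rw [← dInj e1] at hj'; exact hj'
            have hb' : k < k' := by rw [dInj e2] at hj; exact hj
            exact absurd hb' (not_lt.mpr ha'.le)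
    have keyZ2 : ∀ {k k' : Fin m} {y y' : Pt}, y ∈ B₂ → y' ∈ B₂ →
        s(a k, y) = s(a k', y') → k = k' := by
      intro k k' y y' hy hy' heq
      rcases Sym2.eq_iff.mp heq with ⟨e1, e2⟩ | ⟨e1, e2⟩
      · exact aInj e1
      · exact absurd e1 (neOf h12 (aMem k) hy')
    have key : ∀ (t : Fin 3) (k : Fin m) (t' : Fin 3) (k' : Fin m) (q : Sym2 Pt),
        q ∈ G t k → q ∈ G t' k' →
        ((t, k) : Fin 3 × Fin m) = ((t', k') : Fin 3 × Fin m) := by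
      intro t k t' k' q h1 h2
      rcases t with ⟨tv, htv⟩
      rcases t' with ⟨tv', htv'⟩
      interval_cases tv <;> interval_cases tv'
      -- (0,0)
      · rw [hG0 _ rfl k] at h1
        rw [hG0 _ rfl k'] at h2
        rcases h1 with ⟨x, hx, rfl⟩ | ⟨y, hy, rfl⟩ <;>
          rcases h2 with ⟨x', hx', heq⟩ | ⟨y', hy', heq⟩
        · exact congrArg _ (keyX1 hx hx' heq)
        · exact absurd (killA (fun v => v ∈ B₁ ∨ v ∈ B₄) heq
            (Or.inl (aMem k)) (supSA hx)
            (notIn h12 (h24.symm) (bMem k'))) False.elim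
        · exact absurd (killA (fun v => v ∈ B₂ ∨ v ∈ B₃) heq
            (Or.inl (bMem k)) (Or.inr hy)
            (notIn (h12.symm) (h13.symm) (aMem k'))) False.elim
        · exact congrArg _ (keyX2 hy hy' heq)
      -- (0,1)
      · exfalso
        rw [hG0 _ rfl k] at h1
        rw [hG1 _ rfl k'] at h2
        rcases h1 with ⟨x, hx, rfl⟩ | ⟨y, hy, rfl⟩ <;>
          rcases h2 with ⟨x', hx', heq⟩ | ⟨y', hy', heq⟩
        · exact killA (fun v => v ∈ B₁ ∨ v ∈ B₄) heq (Or.inl (aMem k)) (supSA hx)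
            (notIn h12 (h24.symm) (bMem k'))
        · exact killA (fun v => v ∈ B₁ ∨ v ∈ B₄) heq (Or.inl (aMem k)) (supSA hx)
            (notIn h13 (h34.symm) (cMem k'))
        · exact killB (fun v => v ∈ B₂ ∨ v ∈ B₄) heq.symm (Or.inl (bMem k'))
            (supSB hx') (notIn h23 (h34.symm) hy)
        · exact killA (fun v => v ∈ B₃ ∨ v ∈ B₁) heq.symm (Or.inl (cMem k'))
            (supSC hy') (notIn (h23.symm) h12 (bMem k))
      -- (0,2)
      · exfalso
        rw [hG0 _ rfl k] at h1
        rw [hG2 _ rfl k'] at h2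
        rcases h1 with ⟨x, hx, rfl⟩ | ⟨y, hy, rfl⟩ <;>
          rcases h2 with ⟨x', hx', heq⟩ | ⟨y', hy', heq⟩
        · exact killA (fun v => v ∈ B₄ ∨ v ∈ B₃) heq.symm (Or.inl (dMem k'))
            (supSD hx') (notIn (h14.symm) (h13.symm) (aMem k))
        · exact killB (fun v => v ∈ B₁ ∨ v ∈ B₄) heq (Or.inl (aMem k)) (supSA hx)
            (notIn h12 (h24.symm) hy')
        · exact killA (fun v => v ∈ B₂ ∨ v ∈ B₃) heq (Or.inl (bMem k)) (Or.inr hy)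
            (notIn h24 h34 (dMem k'))
        · exact killA (fun v => v ∈ B₂ ∨ v ∈ B₃) heq (Or.inl (bMem k)) (Or.inr hy)
            (notIn (h12.symm) (h13.symm) (aMem k'))
      -- (1,0)
      · exfalso
        rw [hG1 _ rfl k] at h1
        rw [hG0 _ rfl k'] at h2
        rcases h1 with ⟨x, hx, rfl⟩ | ⟨y, hy, rfl⟩ <;>
          rcases h2 with ⟨x', hx', heq⟩ | ⟨y', hy', heq⟩
        · exact killA (fun v => v ∈ B₂ ∨ v ∈ B₄) heq (Or.inl (bMem k)) (supSB hx)
            (notIn (h12.symm) (h14.symm) (aMem k'))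
        · exact killB (fun v => v ∈ B₂ ∨ v ∈ B₄) heq (Or.inl (bMem k)) (supSB hx)
            (notIn h23 (h34.symm) hy')
        · exact killA (fun v => v ∈ B₁ ∨ v ∈ B₄) heq.symm (Or.inl (aMem k'))
            (supSA hx') (notIn h13 (h34.symm) (cMem k))
        · exact killA (fun v => v ∈ B₃ ∨ v ∈ B₁) heq (Or.inl (cMem k)) (supSC hy)
            (notIn (h23.symm) h12 (bMem k'))
      -- (1,1)
      · rw [hG1 _ rfl k] at h1
        rw [hG1 _ rfl k'] at h2
        rcases h1 with ⟨x, hx, rfl⟩ | ⟨y, hy, rfl⟩ <;>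
          rcases h2 with ⟨x', hx', heq⟩ | ⟨y', hy', heq⟩
        · exact congrArg _ (keyY1 hx hx' heq)
        · exact absurd (killA (fun v => v ∈ B₂ ∨ v ∈ B₄) heq
            (Or.inl (bMem k)) (supSB hx)
            (notIn h23 (h34.symm) (cMem k'))) False.elim
        · exact absurd (killA (fun v => v ∈ B₃ ∨ v ∈ B₁) heq
            (Or.inl (cMem k)) (supSC hy)
            (notIn (h23.symm) h12 (bMem k'))) False.elim
        · exact congrArg _ (keyY2 hy hy' heq)
      -- (1,2)
      · exfalso
        rw [hG1 _ rfl k] at h1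
        rw [hG2 _ rfl k'] at h2
        rcases h1 with ⟨x, hx, rfl⟩ | ⟨y, hy, rfl⟩ <;>
          rcases h2 with ⟨x', hx', heq⟩ | ⟨y', hy', heq⟩
        · exact killA (fun v => v ∈ B₄ ∨ v ∈ B₃) heq.symm (Or.inl (dMem k'))
            (supSD hx') (notIn (h24.symm) (h23.symm) (bMem k))
        · exact killA (fun v => v ∈ B₂ ∨ v ∈ B₄) heq (Or.inl (bMem k)) (supSB hx)
            (notIn (h12.symm) (h14.symm) (aMem k'))
        · exact killA (fun v => v ∈ B₃ ∨ v ∈ B₁) heq (Or.inl (cMem k)) (supSC hy)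
            (notIn (h34) (h14) (dMem k'))
        · exact killB (fun v => v ∈ B₃ ∨ v ∈ B₁) heq (Or.inl (cMem k)) (supSC hy)
            (notIn (h23.symm) h12 hy')
      -- (2,0)
      · exfalso
        rw [hG2 _ rfl k] at h1
        rw [hG0 _ rfl k'] at h2
        rcases h1 with ⟨x, hx, rfl⟩ | ⟨y, hy, rfl⟩ <;>
          rcases h2 with ⟨x', hx', heq⟩ | ⟨y', hy', heq⟩
        · exact killA (fun v => v ∈ B₄ ∨ v ∈ B₃) heq (Or.inl (dMem k)) (supSD hx)
            (notIn (h14.symm) (h13.symm) (aMem k'))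
        · exact killA (fun v => v ∈ B₄ ∨ v ∈ B₃) heq (Or.inl (dMem k)) (supSD hx)
            (notIn (h24.symm) (h23.symm) (bMem k'))
        · exact killB (fun v => v ∈ B₁ ∨ v ∈ B₄) heq.symm (Or.inl (aMem k'))
            (supSA hx') (notIn h12 (h24.symm) hy)
        · exact killA (fun v => v ∈ B₂ ∨ v ∈ B₃) heq.symm (Or.inl (bMem k'))
            (Or.inr hy') (notIn (h12.symm) (h13.symm) (aMem k))
      -- (2,1)
      · exfalso
        rw [hG2 _ rfl k] at h1
        rw [hG1 _ rfl k'] at h2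
        rcases h1 with ⟨x, hx, rfl⟩ | ⟨y, hy, rfl⟩ <;>
          rcases h2 with ⟨x', hx', heq⟩ | ⟨y', hy', heq⟩
        · exact killA (fun v => v ∈ B₄ ∨ v ∈ B₃) heq (Or.inl (dMem k)) (supSD hx)
            (notIn (h24.symm) (h23.symm) (bMem k'))
        · exact killA (fun v => v ∈ B₃ ∨ v ∈ B₁) heq.symm (Or.inl (cMem k'))
            (supSC hy') (notIn (h34) (h14) (dMem k))
        · exact killA (fun v => v ∈ B₂ ∨ v ∈ B₄) heq.symm (Or.inl (bMem k'))
            (supSB hx') (notIn (h12.symm) (h14.symm) (aMem k))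
        · exact killB (fun v => v ∈ B₃ ∨ v ∈ B₁) heq.symm (Or.inl (cMem k'))
            (supSC hy') (notIn (h23.symm) h12 hy)
      -- (2,2)
      · rw [hG2 _ rfl k] at h1
        rw [hG2 _ rfl k'] at h2
        rcases h1 with ⟨x, hx, rfl⟩ | ⟨y, hy, rfl⟩ <;>
          rcases h2 with ⟨x', hx', heq⟩ | ⟨y', hy', heq⟩
        · exact congrArg _ (keyZ1 hx hx' heq)
        · exact absurd (killA (fun v => v ∈ B₄ ∨ v ∈ B₃) heq
            (Or.inl (dMem k)) (supSD hx)
            (notIn (h14.symm) (h13.symm) (aMem k'))) False.elim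
        · exact absurd (killA (fun v => v ∈ B₁ ∨ v ∈ B₂) heq
            (Or.inl (aMem k)) (Or.inr hy)
            (notIn h14 h24 (dMem k'))) False.elim
        · exact congrArg _ (keyZ2 hy hy' heq)
    intro i j hij
    have hinj : finProdFinEquiv.symm i ≠ finProdFinEquiv.symm j :=
      fun h => hij (finProdFinEquiv.symm.injective h)
    rw [Function.onFun, Set.disjoint_left]
    intro q hqi hqj
    rcases hpi : finProdFinEquiv.symm i with ⟨t, k⟩
    rcases hpj : finProdFinEquiv.symm j with ⟨t', k'⟩
    rw [hpi, hpj] at hinj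
    simp only [F, hpi] at hqi
    simp only [F, hpj] at hqj
    exact hinj (key t k t' k' q hqi hqj)
  · -- each class is plane and an at-most-two-star forest
    intro i
    rcases hp : finProdFinEquiv.symm i with ⟨t, k⟩
    have hFi : F i = G t k := by simp only [F, hp]
    rw [hFi]
    rcases t with ⟨tv, htv⟩
    interval_cases tv
    · rw [hG0 ⟨0, htv⟩ rfl k]
      constructor
      · exact plane_union (geo0 k)
      · apply forest_union
        intro v hv hv'
        have hv1 : v ∈ B₁ ∨ v ∈ B₄ := by
          rcases hv with rfl | hv
          · exact Or.inl (aMem k)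
          · rcases hv with ⟨j, _, rfl⟩ | h4
            · exact Or.inl (aMem j)
            · exact Or.inr h4
        have hv2 : v ∈ B₂ ∨ v ∈ B₃ := by
          rcases hv' with rfl | hv'
          · exact Or.inl (bMem k)
          · exact Or.inr hv'
        rcases hv1 with h | h <;> rcases hv2 with h' | h'
        · exact clash h12 h h'
        · exact clash h13 h h'
        · exact clash h24 h' h
        · exact clash h34 h' h
    · rw [hG1 ⟨1, htv⟩ rfl k]
      constructor
      · exact plane_union (geo1 k)
      · apply forest_union
        intro v hv hv'
        have hv1 : v ∈ B₂ ∨ v ∈ B₄ := by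
          rcases hv with rfl | hv
          · exact Or.inl (bMem k)
          · rcases hv with ⟨j, _, rfl⟩ | h4
            · exact Or.inl (bMem j)
            · exact Or.inr h4
        have hv2 : v ∈ B₃ ∨ v ∈ B₁ := by
          rcases hv' with rfl | hv'
          · exact Or.inl (cMem k)
          · rcases hv' with ⟨j, _, rfl⟩ | h1
            · exact Or.inl (cMem j)
            · exact Or.inr h1
        rcases hv1 with h | h <;> rcases hv2 with h' | h'
        · exact clash h23 h h'
        · exact clash h12 h' h
        · exact clash h34 h' h
        · exact clash h14 h' h
    · rw [hG2 ⟨2, htv⟩ rfl k]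
      constructor
      · exact plane_union (geo2 k)
      · apply forest_union
        intro v hv hv'
        have hv1 : v ∈ B₄ ∨ v ∈ B₃ := by
          rcases hv with rfl | hv
          · exact Or.inl (dMem k)
          · rcases hv with h3 | ⟨j, _, rfl⟩
            · exact Or.inr h3
            · exact Or.inl (dMem j)
        have hv2 : v ∈ B₁ ∨ v ∈ B₂ := by
          rcases hv' with rfl | hv'
          · exact Or.inl (aMem k)
          · exact Or.inr hv'
        rcases hv1 with h | h <;> rcases hv2 with h' | h'
        · exact clash h14 h' h
        · exact clash h24 h' h
        · exact clash h13 h' h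
        · exact clash h23 h' h
end
end

section
/- For every ε > 0 there exist infinitely many even integers n with the following property: there is a set A of n points in the plane in general position whose ratio of maximum to minimum pairwise distance is at most (√2 + ε)·√n, such that the complete geometric graph induced by A contains n/2 pairwise crossing edges; consequently, every partition of the edge set of this complete geometric graph into plane subgraphs consists of at least n/2 parts. -/
noncomputable section

/-- `A` is `α`-dense: the ratio of the maximum to the minimum pairwise distance
in `A` is at most `α * √(A.card)`. -/
def AlphaDense (α : ℝ) (A : Finset Pt) : Prop :=
  ∀ p ∈ A, ∀ q ∈ A, ∀ p' ∈ A, ∀ q' ∈ A, p ≠ q → p' ≠ q' →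
    dist p q ≤ α * Real.sqrt A.card * dist p' q'


-- a line (affine span of two points) is not everything
lemma line_ne_top (x y : Pt) : affineSpan ℝ ({x, y} : Set Pt) ≠ ⊤ := by
  intro h
  have h1 : vectorSpan ℝ ({x, y} : Set Pt) = ⊤ := by
    rw [← direction_affineSpan, h, AffineSubspace.direction_top]
  have h2 : Module.finrank ℝ (vectorSpan ℝ ({x, y} : Set Pt)) ≤ 1 := by
    rw [vectorSpan_pair]
    exact finrank_span_le_card _ |>.trans (by simp)
  rw [h1] at h2
  have : Module.finrank ℝ Pt = 2 := finrank_euclideanSpace_fin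
  rw [finrank_top] at h2
  omega

-- generic point near b avoiding all lines through pairs of T ∪ {extra condition v ≠ 0}
lemma exists_generic (b : Pt) (η : ℝ) (hη : 0 < η) (T : Finset Pt) :
    ∃ v : Pt, dist v b < η ∧ v ≠ 0 ∧
      ∀ x ∈ T, ∀ y ∈ T, x ≠ y → v ∉ affineSpan ℝ ({x, y} : Set Pt) := by
  classical
  set e1 : Pt := EuclideanSpace.single 0 1 with he1
  set Bad : Set Pt :=
    (⋃ p ∈ (T ×ˢ T : Finset (Pt × Pt)), (affineSpan ℝ ({p.1, p.2} : Set Pt) : Set Pt)) ∪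
      (affineSpan ℝ ({0, e1} : Set Pt) : Set Pt) with hBad
  have hnull : MeasureTheory.volume Bad = 0 := by
    rw [hBad]
    refine MeasureTheory.measure_union_null ?_ ?_
    · refine (MeasureTheory.measure_biUnion_null_iff (Finset.countable_toSet _)).2 ?_
      intro p _
      exact MeasureTheory.Measure.addHaar_affineSubspace _ _ (line_ne_top _ _)
    · exact MeasureTheory.Measure.addHaar_affineSubspace _ _ (line_ne_top _ _)
  have hpos : 0 < MeasureTheory.volume (Metric.ball b η) := Metric.measure_ball_pos _ _ hη
  have : ¬ (Metric.ball b η ⊆ Bad) := by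
    intro hsub
    exact absurd (le_antisymm ((MeasureTheory.measure_mono hsub).trans hnull.le) zero_le)
      (by simpa using hpos.ne')
  obtain ⟨v, hvball, hvbad⟩ := Set.not_subset.1 this
  refine ⟨v, by simpa [dist_comm] using Metric.mem_ball.1 hvball, ?_, ?_⟩
  · intro h0
    apply hvbad
    right
    rw [h0]
    exact mem_affineSpan ℝ (by simp)
  · intro x hx y hy hxy hmem
    apply hvbad
    left
    refine Set.mem_biUnion (Finset.mem_coe.2 (Finset.mem_product.2 ⟨hx, hy⟩) :
      ((x, y) : Pt × Pt) ∈ (T ×ˢ T : Finset (Pt × Pt))) ?_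
    exact hmem

lemma mem_line_iff {p x y : Pt} :
    p ∈ affineSpan ℝ ({x, y} : Set Pt) ↔ ∃ r : ℝ, r • (y - x) = p - x := by
  have h := @vadd_left_mem_affineSpan_pair ℝ _ _ _ _ _ _ x y (p - x)
  simpa [vsub_eq_sub, vadd_eq_add, sub_add_cancel] using h

set_option maxHeartbeats 1000000 in
lemma exists_perturb (η : ℝ) (hη : 0 < η) : ∀ n (b : Fin n → Pt),
    ∃ g : Fin n → Pt, (∀ i, dist (g i) (b i) < η) ∧ (∀ i, g i ≠ 0) ∧
      GenPos (⋃ i, ({g i, -g i} : Set Pt)) := by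
  intro n
  induction n with
  | zero =>
    exact fun b => ⟨fun i => i.elim0, fun i => i.elim0, fun i => i.elim0,
      by simp [GenPos]⟩
  | succ n ih =>
    intro b
    obtain ⟨g, hd, h0, hgp⟩ := ih (fun i => b i.succ)
    classical
    set S : Set Pt := ⋃ i, ({g i, -g i} : Set Pt) with hSdef
    set T : Finset Pt :=
      insert (0 : Pt) ((Finset.univ.image g) ∪ (Finset.univ.image fun i => -g i)) with hTdef
    obtain ⟨v, hvd, hv0, hvl⟩ := exists_generic (b 0) η hη T
    have hSmem : ∀ x, x ∈ S ↔ ∃ i, x = g i ∨ x = -g i := by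
      intro x; simp [hSdef, or_comm, eq_comm]
    have hST : ∀ x ∈ S, x ∈ T := by
      intro x hx
      obtain ⟨i, hi | hi⟩ := (hSmem x).1 hx
      · subst hi
        simp only [hTdef, Finset.mem_insert, Finset.mem_union, Finset.mem_image]
        exact Or.inr (Or.inl ⟨i, Finset.mem_univ _, rfl⟩)
      · subst hi
        simp only [hTdef, Finset.mem_insert, Finset.mem_union, Finset.mem_image]
        exact Or.inr (Or.inr ⟨i, Finset.mem_univ _, rfl⟩)
    have hS0 : ∀ x ∈ S, x ≠ 0 := by
      intro x hx
      obtain ⟨i, hi | hi⟩ := (hSmem x).1 hx <;> subst hi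
      · exact h0 i
      · simpa using h0 i
    have hsym : ∀ x ∈ S, -x ∈ S := by
      intro x hx
      obtain ⟨i, hi | hi⟩ := (hSmem x).1 hx <;> subst hi
      · exact (hSmem _).2 ⟨i, Or.inr rfl⟩
      · exact (hSmem _).2 ⟨i, Or.inl (by simp)⟩
    -- fact 1 : neither v nor -v is on a line through two points of S
    have H1 : ∀ w x y : Pt, (w = v ∨ w = -v) → x ∈ S → y ∈ S → x ≠ y →
        w ∈ affineSpan ℝ ({x, y} : Set Pt) → False := by
      rintro w x y (rfl | rfl) hx hy hxy hmem
      · exact hvl x (hST x hx) y (hST y hy) hxy hmem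
      · have : v ∈ affineSpan ℝ ({-x, -y} : Set Pt) := by
          rw [mem_line_iff] at hmem ⊢
          obtain ⟨r, hr⟩ := hmem
          exact ⟨r, by rw [show -y - -x = -(y - x) from by abel, smul_neg, hr]; abel⟩
        exact hvl (-x) (hST _ (hsym x hx)) (-y) (hST _ (hsym y hy))
          (fun h => hxy (by simpa using congrArg Neg.neg h)) this
    -- fact 2 : no point of S is on the line through v and -v
    have H2' : ∀ x ∈ S, x ∈ affineSpan ℝ ({v, -v} : Set Pt) → False := by
      intro x hx hmem
      rw [mem_line_iff] at hmem
      obtain ⟨r, hr⟩ := hmem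
      have hxc : x = (1 - 2 * r) • v := by
        have hx' : x = r • (-v - v) + v := by rw [hr]; abel
        rw [hx']; module
      have hc0 : (1 - 2 * r) ≠ 0 := by
        intro h; apply hS0 x hx; rw [hxc, h, zero_smul]
      have hvx : v ∈ affineSpan ℝ ({(0 : Pt), x} : Set Pt) := by
        rw [mem_line_iff]
        exact ⟨(1 - 2 * r)⁻¹, by rw [hxc, sub_zero, sub_zero, smul_smul,
          inv_mul_cancel₀ hc0, one_smul]⟩
      have h0T : (0 : Pt) ∈ T := by simp [hTdef]
      exact hvl 0 h0T x (hST x hx) (fun h => hS0 x hx h.symm) hvx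
    have H2 : ∀ w w' x : Pt, (w = v ∨ w = -v) → (w' = v ∨ w' = -v) → w ≠ w' → x ∈ S →
        x ∈ affineSpan ℝ ({w, w'} : Set Pt) → False := by
      rintro w w' x (rfl | rfl) (rfl | rfl) hww' hx hmem
      · exact hww' rfl
      · exact H2' x hx hmem
      · exact H2' x hx (by rwa [Set.pair_comm] at hmem)
      · exact hww' rfl
    refine ⟨Fin.cons v g, ?_, ?_, ?_⟩
    · intro i
      induction i using Fin.cases with
      | zero => simpa using hvd
      | succ j => simpa using hd j
    · intro i
      induction i using Fin.cases with
      | zero => simpa using hv0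
      | succ j => simpa using h0 j
    · have hsub1 : (⋃ i, ({(Fin.cons v g : Fin (n+1) → Pt) i,
          -(Fin.cons v g : Fin (n+1) → Pt) i} : Set Pt)) ⊆ ({v, -v} : Set Pt) ∪ S := by
        intro x hx
        obtain ⟨i, hi⟩ := Set.mem_iUnion.1 hx
        induction i using Fin.cases with
        | zero => left; simpa using hi
        | succ j =>
          right
          rw [Fin.cons_succ] at hi
          exact Set.mem_iUnion.2 ⟨j, hi⟩
      have hsub2 : ({v, -v} : Set Pt) ∪ S ⊆ (⋃ i, ({(Fin.cons v g : Fin (n+1) → Pt) i,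
          -(Fin.cons v g : Fin (n+1) → Pt) i} : Set Pt)) := by
        intro x hx
        rcases hx with hx | hx
        · exact Set.mem_iUnion.2 ⟨0, by simpa using hx⟩
        · obtain ⟨j, hj⟩ := Set.mem_iUnion.1 hx
          exact Set.mem_iUnion.2 ⟨j.succ, by simpa using hj⟩
      rw [Set.Subset.antisymm hsub1 hsub2]
      intro p hp q hq r hr hpq hpr hqr hcol
      have hpm : p ∈ ({p, q, r} : Set Pt) := by simp
      have hqm : q ∈ ({p, q, r} : Set Pt) := by simp
      have hrm : r ∈ ({p, q, r} : Set Pt) := by simp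
      rcases hp with hnp | hop <;> rcases hq with hnq | hoq <;> rcases hr with hnr | hor
      · rcases hnp with rfl | rfl <;> rcases hnq with rfl | rfl <;>
          rcases hnr with rfl | rfl <;>
          first | exact hpq rfl | exact hpr rfl | exact hqr rfl
      · exact H2 p q r hnp hnq hpq hor (hcol.mem_affineSpan_of_mem_of_ne hpm hqm hrm hpq)
      · exact H2 p r q hnp hnr hpr hoq (hcol.mem_affineSpan_of_mem_of_ne hpm hrm hqm hpr)
      · exact H1 p q r hnp hoq hor hqr (hcol.mem_affineSpan_of_mem_of_ne hqm hrm hpm hqr)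
      · exact H2 q r p hnq hnr hqr hop (hcol.mem_affineSpan_of_mem_of_ne hqm hrm hpm hqr)
      · exact H1 q p r hnq hop hor hpr (hcol.mem_affineSpan_of_mem_of_ne hpm hrm hqm hpr)
      · exact H1 r p q hnr hop hoq hpq (hcol.mem_affineSpan_of_mem_of_ne hpm hqm hrm hpq)
      · exact hgp p hop q hoq r hor hpq hpr hqr hcol

/-- An explicit point of the plane. -/
def pt (x y : ℝ) : Pt := (WithLp.equiv 2 (Fin 2 → ℝ)).symm ![x, y]

@[simp] lemma pt_apply_zero (x y : ℝ) : pt x y 0 = x := rfl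
@[simp] lemma pt_apply_one (x y : ℝ) : pt x y 1 = y := rfl

lemma abs_coord_le_dist (p q : Pt) (j : Fin 2) : |p j - q j| ≤ dist p q := by
  rw [EuclideanSpace.dist_eq, show |p j - q j| = Real.sqrt ((p j - q j)^2)
    from (Real.sqrt_sq_eq_abs _).symm]
  apply Real.sqrt_le_sqrt
  have := Finset.single_le_sum (f := fun i => dist (p i) (q i) ^ 2)
    (fun i _ => sq_nonneg _) (Finset.mem_univ j)
  simpa [Real.dist_eq, sq_abs] using this

lemma abs_coord_le_norm (p : Pt) (j : Fin 2) : |p j| ≤ ‖p‖ := by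
  have := abs_coord_le_dist p 0 j
  simpa using this

lemma norm_le_sqrt_two_mul (p : Pt) (M : ℝ) (h0 : |p 0| ≤ M) (h1 : |p 1| ≤ M) :
    ‖p‖ ≤ Real.sqrt 2 * M := by
  have hM : 0 ≤ M := le_trans (abs_nonneg _) h0
  rw [EuclideanSpace.norm_eq]
  have hsum : ∑ i, ‖p i‖ ^ 2 ≤ 2 * M ^ 2 := by
    rw [Fin.sum_univ_two]
    have a0 : ‖p 0‖ ^ 2 ≤ M ^ 2 := by
      rw [Real.norm_eq_abs, ← sq_abs M]
      exact pow_le_pow_left₀ (abs_nonneg _) (le_trans h0 (le_abs_self M)) 2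
    have a1 : ‖p 1‖ ^ 2 ≤ M ^ 2 := by
      rw [Real.norm_eq_abs, ← sq_abs M]
      exact pow_le_pow_left₀ (abs_nonneg _) (le_trans h1 (le_abs_self M)) 2
    linarith
  calc Real.sqrt (∑ i, ‖p i‖ ^ 2) ≤ Real.sqrt (2 * M ^ 2) := Real.sqrt_le_sqrt hsum
    _ = Real.sqrt 2 * M := by
        rw [Real.sqrt_mul (by norm_num), Real.sqrt_sq hM]

@[simp] lemma pt_neg_apply (p : Pt) (j : Fin 2) : (-p) j = -(p j) := rfl

lemma one_le_abs_nat_cast_sub {a b : ℕ} (h : a ≠ b) : (1 : ℝ) ≤ |(a : ℝ) - b| := by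
  rcases h.lt_or_gt with hl | hl
  · have hc : (a : ℝ) + 1 ≤ b := by exact_mod_cast hl
    rw [abs_sub_comm]
    calc (1:ℝ) ≤ (b : ℝ) - a := by linarith
      _ ≤ |(b : ℝ) - a| := le_abs_self _
  · have hc : (b : ℝ) + 1 ≤ a := by exact_mod_cast hl
    calc (1:ℝ) ≤ (a : ℝ) - b := by linarith
      _ ≤ |(a : ℝ) - b| := le_abs_self _

section Grid
variable (s : ℕ)

/-- Base grid points (the "lower half" of a centered `2s × 2s` grid). -/
def base (k : Fin (2 * s * s)) : Pt :=
  pt ((((finProdFinEquiv.symm k).1 : Fin (2 * s)) : ℝ) - s + 1/2)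
     ((((finProdFinEquiv.symm k).2 : Fin s) : ℝ) - s + 1/2)

variable {s}

lemma base_apply_zero (k : Fin (2 * s * s)) :
    base s k 0 = (((finProdFinEquiv.symm k).1 : Fin (2 * s)) : ℝ) - s + 1/2 := rfl

lemma base_apply_one (k : Fin (2 * s * s)) :
    base s k 1 = (((finProdFinEquiv.symm k).2 : Fin s) : ℝ) - s + 1/2 := rfl

lemma base_abs_zero (k : Fin (2 * s * s)) : |base s k 0| ≤ (s : ℝ) - 1/2 := by
  have hi : ((((finProdFinEquiv.symm k).1 : Fin (2*s)) : ℕ) : ℝ) + 1 ≤ 2 * (s : ℝ) := by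
    exact_mod_cast (finProdFinEquiv.symm k).1.isLt
  have hi0 : (0:ℝ) ≤ ((((finProdFinEquiv.symm k).1 : Fin (2*s)) : ℕ) : ℝ) := Nat.cast_nonneg _
  rw [base_apply_zero, abs_le]
  constructor <;> linarith

lemma base_y_le (k : Fin (2 * s * s)) : base s k 1 ≤ -(1/2) := by
  set j := (finProdFinEquiv.symm k).2
  have hj : ((j : ℕ) : ℝ) + 1 ≤ (s : ℝ) := by exact_mod_cast j.isLt
  rw [base_apply_one]; linarith

lemma base_abs_one (k : Fin (2 * s * s)) : |base s k 1| ≤ (s : ℝ) - 1/2 := by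
  have hj : ((((finProdFinEquiv.symm k).2 : Fin s) : ℕ) : ℝ) + 1 ≤ (s : ℝ) := by
    exact_mod_cast (finProdFinEquiv.symm k).2.isLt
  have hj0 : (0:ℝ) ≤ ((((finProdFinEquiv.symm k).2 : Fin s) : ℕ) : ℝ) := Nat.cast_nonneg _
  rw [base_apply_one, abs_le]
  constructor <;> linarith

lemma base_norm_upper (k : Fin (2 * s * s)) :
    ‖base s k‖ ≤ Real.sqrt 2 * ((s : ℝ) - 1/2) :=
  norm_le_sqrt_two_mul _ _ (base_abs_zero k) (base_abs_one k)

lemma base_norm_lower (k : Fin (2 * s * s)) : 1/2 ≤ ‖base s k‖ := by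
  have h := abs_coord_le_norm (base s k) 1
  have := base_y_le k
  have habs : (1:ℝ)/2 ≤ |base s k 1| := by
    have h2 := neg_le_abs (base s k 1)
    linarith
  linarith

lemma base_sep {k k' : Fin (2 * s * s)} (h : k ≠ k') :
    1 ≤ dist (base s k) (base s k') := by
  have hne : finProdFinEquiv.symm k ≠ finProdFinEquiv.symm k' :=
    fun hh => h (finProdFinEquiv.symm.injective hh)
  by_cases hij : (finProdFinEquiv.symm k).1 = (finProdFinEquiv.symm k').1
  · have hj : (finProdFinEquiv.symm k).2 ≠ (finProdFinEquiv.symm k').2 := by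
      intro hh; exact hne (Prod.ext hij hh)
    have h1 : (1:ℝ) ≤ |base s k 1 - base s k' 1| := by
      rw [base_apply_one, base_apply_one,
        show ((((finProdFinEquiv.symm k).2 : Fin s) : ℝ) - s + 1/2) -
            ((((finProdFinEquiv.symm k').2 : Fin s) : ℝ) - s + 1/2)
          = (((finProdFinEquiv.symm k).2 : ℕ) : ℝ) -
            (((finProdFinEquiv.symm k').2 : ℕ) : ℝ) by ring]
      exact one_le_abs_nat_cast_sub (fun hh => hj (Fin.ext hh))
    exact h1.trans (abs_coord_le_dist _ _ 1)
  · have h1 : (1:ℝ) ≤ |base s k 0 - base s k' 0| := by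
      rw [base_apply_zero, base_apply_zero,
        show ((((finProdFinEquiv.symm k).1 : Fin (2*s)) : ℝ) - s + 1/2) -
            ((((finProdFinEquiv.symm k').1 : Fin (2*s)) : ℝ) - s + 1/2)
          = (((finProdFinEquiv.symm k).1 : ℕ) : ℝ) -
            (((finProdFinEquiv.symm k').1 : ℕ) : ℝ) by ring]
      exact one_le_abs_nat_cast_sub (fun hh => hij (Fin.ext hh))
    exact h1.trans (abs_coord_le_dist _ _ 0)

lemma base_sep_neg (k k' : Fin (2 * s * s)) :
    1 ≤ dist (base s k) (-(base s k')) := by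
  have h1 := base_y_le k
  have h2 := base_y_le k'
  have h3 : base s k 1 - (-(base s k')) 1 ≤ -1 := by
    rw [pt_neg_apply]; linarith
  have : (1:ℝ) ≤ |base s k 1 - (-(base s k')) 1| := by
    rw [abs_sub_comm]
    calc (1:ℝ) ≤ (-(base s k')) 1 - base s k 1 := by linarith
    _ ≤ |(-(base s k')) 1 - base s k 1| := le_abs_self _
  exact this.trans (abs_coord_le_dist _ _ 1)

end Grid


set_option maxHeartbeats 1000000 in
/-- For every `ε > 0` there are arbitrarily large even `n` and `(√2 + ε)`-dense sets of
`n` points in general position whose complete geometric graph contains `n/2` pairwise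
crossing edges; consequently, every partition of its edge set into plane subgraphs has
at least `n/2` parts. -/
theorem dense_set_with_large_crossing_family (ε : ℝ) (hε : 0 < ε) (N : ℕ) :
    ∃ n : ℕ, N ≤ n ∧ Even n ∧
      ∃ A : Finset Pt, A.card = n ∧ GenPos ↑A ∧ AlphaDense (Real.sqrt 2 + ε) A ∧
        (∃ C : Finset (Sym2 Pt), ↑C ⊆ edges ↑A ∧ C.card = n / 2 ∧
          ∀ e ∈ C, ∀ f ∈ C, e ≠ f → Cross e f) ∧
        (∀ (m : ℕ) (F : Fin m → Set (Sym2 Pt)),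
          IsPartitionInto ↑A m F → (∀ i, PlaneEdges (F i)) → n / 2 ≤ m) := by
  classical
  set s : ℕ := max N 1 with hs
  have hs1 : 1 ≤ s := le_max_right N 1
  have hs1R : (1:ℝ) ≤ (s:ℝ) := by exact_mod_cast hs1
  have hsqrt2pos : (0:ℝ) < Real.sqrt 2 := Real.sqrt_pos.2 (by norm_num)
  have hsqrt2one : (1:ℝ) ≤ Real.sqrt 2 := by
    nlinarith [Real.sq_sqrt (by norm_num : (0:ℝ) ≤ 2), Real.sqrt_nonneg 2]
  have hse : (0:ℝ) < Real.sqrt 2 + ε := by linarith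
  set η : ℝ := ε / (4 * (Real.sqrt 2 + ε)) with hηdef
  have hη : 0 < η := div_pos hε (by linarith)
  have hη4 : η < 1/4 := by
    rw [hηdef, div_lt_iff₀ (by linarith)]
    nlinarith
  obtain ⟨g, hgd, hg0, hgp⟩ := exists_perturb η hη (2 * s * s) (base s)
  set fpt : Bool × Fin (2 * s * s) → Pt :=
    fun ck => if ck.1 then -(g ck.2) else g ck.2 with hfpt
  set bpt : Bool × Fin (2 * s * s) → Pt :=
    fun ck => if ck.1 then -(base s ck.2) else base s ck.2 with hbpt
  have hFB : ∀ ck, dist (fpt ck) (bpt ck) < η := by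
    rintro ⟨c, k⟩
    cases c
    · simpa [hfpt, hbpt] using hgd k
    · simpa [hfpt, hbpt, dist_neg_neg] using hgd k
  have hBsep : ∀ ck ck', ck ≠ ck' → 1 ≤ dist (bpt ck) (bpt ck') := by
    rintro ⟨c, k⟩ ⟨c', k'⟩ hne
    cases c <;> cases c'
    · have hk : k ≠ k' := fun h => hne (by rw [h])
      simpa [hbpt] using base_sep hk
    · simpa [hbpt] using base_sep_neg k k'
    · simpa [hbpt, dist_comm] using base_sep_neg k' k
    · have hk : k ≠ k' := fun h => hne (by rw [h])
      simpa [hbpt, dist_neg_neg] using base_sep hk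
  have hsep : ∀ ck ck', ck ≠ ck' → 1 - 2*η ≤ dist (fpt ck) (fpt ck') := by
    intro ck ck' h
    have h1 := hFB ck
    have h2 := hFB ck'
    have h3 := hBsep ck ck' h
    have h4 := dist_triangle4 (bpt ck) (fpt ck) (fpt ck') (bpt ck')
    have h5 : dist (bpt ck) (fpt ck) = dist (fpt ck) (bpt ck) := dist_comm _ _
    have h6 : dist (fpt ck') (bpt ck') = dist (fpt ck') (bpt ck') := rfl
    linarith
  have hposmin : (0:ℝ) < 1 - 2*η := by linarith
  have hFinj : Function.Injective fpt := by
    intro a b hab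
    by_contra hne
    have := hsep a b hne
    rw [hab, dist_self] at this
    linarith
  set A : Finset Pt := Finset.image fpt Finset.univ with hA
  have hmemA : ∀ ck, fpt ck ∈ A := fun ck => Finset.mem_image_of_mem fpt (Finset.mem_univ ck)
  have hAcard : A.card = 4 * s^2 := by
    rw [hA, Finset.card_image_of_injective _ hFinj, Finset.card_univ]
    have : Fintype.card (Bool × Fin (2 * s * s)) = 2 * (2 * s * s) := by simp
    rw [this]; ring
  -- elements of A come from indices
  have hAelt : ∀ x ∈ A, ∃ ck, fpt ck = x := by
    intro x hx
    obtain ⟨ck, _, h⟩ := Finset.mem_image.1 hx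
    exact ⟨ck, h⟩
  -- norms of elements
  have hnormA : ∀ x ∈ A, ‖x‖ ≤ Real.sqrt 2 * ((s:ℝ) - 1/2) + η := by
    intro x hx
    obtain ⟨ck, rfl⟩ := hAelt x hx
    have h1 : dist (fpt ck) (bpt ck) < η := hFB ck
    have h2 : ‖bpt ck‖ ≤ Real.sqrt 2 * ((s:ℝ) - 1/2) := by
      rcases ck with ⟨c, k⟩
      cases c
      · simpa [hbpt] using base_norm_upper k
      · simpa [hbpt] using base_norm_upper k
    calc ‖fpt ck‖ = ‖bpt ck + (fpt ck - bpt ck)‖ := by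
          rw [show bpt ck + (fpt ck - bpt ck) = fpt ck from by abel]
      _ ≤ ‖bpt ck‖ + ‖fpt ck - bpt ck‖ := norm_add_le _ _
      _ ≤ Real.sqrt 2 * ((s:ℝ) - 1/2) + η := by
          rw [← dist_eq_norm]
          linarith
  -- min distance in A
  have hminA : ∀ p ∈ A, ∀ q ∈ A, p ≠ q → 1 - 2*η ≤ dist p q := by
    intro p hp q hq hpq
    obtain ⟨ck, rfl⟩ := hAelt p hp
    obtain ⟨ck', rfl⟩ := hAelt q hq
    exact hsep ck ck' (fun h => hpq (by rw [h]))
  set C : Finset (Sym2 Pt) := Finset.image (fun k : Fin (2*s*s) => s(g k, -(g k)))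
    Finset.univ with hC
  have hgg : ∀ k k' : Fin (2*s*s), k ≠ k' → g k ≠ g k' := by
    intro k k' hk h
    exact hk (congrArg Prod.snd (hFinj (show fpt (false, k) = fpt (false, k') by
      simp [hfpt, h])))
  have hgneg : ∀ k k' : Fin (2*s*s), g k ≠ -(g k') := by
    intro k k' h
    have := hFinj (show fpt (false, k) = fpt (true, k') by simp [hfpt, h])
    exact Bool.noConfusion (congrArg Prod.fst this)
  have hCinj : Function.Injective (fun k : Fin (2*s*s) => s(g k, -(g k))) := by
    intro k k' h
    simp only [Sym2.eq_iff] at h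
    rcases h with ⟨h1, _⟩ | ⟨h1, _⟩
    · by_contra hne
      exact hgg k k' hne h1
    · exact absurd h1 (hgneg k k')
  have hCcard : C.card = 4 * s^2 / 2 := by
    rw [hC, Finset.card_image_of_injective _ hCinj, Finset.card_univ, Fintype.card_fin]
    have h4 : 4 * s^2 = (2 * s * s) * 2 := by ring
    rw [h4, Nat.mul_div_cancel _ (by norm_num)]
  have hCedges : ↑C ⊆ edges (↑A : Set Pt) := by
    intro e he
    obtain ⟨k, _, rfl⟩ := Finset.mem_image.1 (Finset.mem_coe.1 he)
    exact ⟨g k, hmemA (false, k), -(g k), hmemA (true, k), hgneg k k, rfl⟩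
  have hCross : ∀ e ∈ C, ∀ f ∈ C, e ≠ f → Cross e f := by
    intro e he f hf hef
    obtain ⟨k, _, rfl⟩ := Finset.mem_image.1 he
    obtain ⟨k', _, rfl⟩ := Finset.mem_image.1 hf
    have hkk' : k ≠ k' := fun h => hef (by rw [h])
    refine ⟨g k, -(g k), g k', -(g k'), rfl, rfl, hgg k k' hkk', hgneg k k', ?_, ?_, ?_⟩
    · intro h
      exact hgneg k' k (by rw [← h])
    · intro h
      exact hgg k k' hkk' (neg_injective h)
    · refine ⟨0, ?_, ?_⟩
      · exact ⟨1/2, 1/2, by norm_num, by norm_num, by norm_num, by module⟩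
      · exact ⟨1/2, 1/2, by norm_num, by norm_num, by norm_num, by module⟩
  refine ⟨4 * s^2, ?_, ⟨2 * s^2, by ring⟩, A, hAcard, ?_, ?_, ?_, ?_⟩
  · calc N ≤ s := le_max_left N 1
      _ ≤ 4 * s^2 := by nlinarith
  · -- general position
    have hsub : (↑A : Set Pt) ⊆ ⋃ i, ({g i, -(g i)} : Set Pt) := by
      intro x hx
      obtain ⟨ck, rfl⟩ := hAelt x hx
      refine Set.mem_iUnion.2 ⟨ck.2, ?_⟩
      rcases ck with ⟨c, k⟩
      cases c
      · exact Or.inl (by simp [hfpt])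
      · exact Or.inr (by simp [hfpt])
    exact fun p hp q hq r hr h1 h2 h3 =>
      hgp p (hsub hp) q (hsub hq) r (hsub hr) h1 h2 h3
  · -- density
    intro p hp q hq p' hp' q' hq' hpq hp'q'
    rw [hAcard]
    have hsqrtcar : Real.sqrt ((4 * s^2 : ℕ) : ℝ) = 2 * (s:ℝ) := by
      push_cast
      rw [show (4:ℝ) * (s:ℝ)^2 = (2*(s:ℝ))^2 by ring]
      exact Real.sqrt_sq (by positivity)
    rw [hsqrtcar]
    have hnp := hnormA p hp
    have hnq := hnormA q hq
    have hdpq : dist p q ≤ Real.sqrt 2 * (2 * (s:ℝ)) := by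
      have := norm_sub_le p q
      rw [dist_eq_norm]
      nlinarith
    have hmin := hminA p' hp' q' hq' hp'q'
    have key : (Real.sqrt 2 + ε) * (1 - 2*η) = Real.sqrt 2 + ε/2 := by
      rw [hηdef]
      field_simp
      ring
    calc dist p q ≤ Real.sqrt 2 * (2 * (s:ℝ)) := hdpq
      _ ≤ ((Real.sqrt 2 + ε) * (1 - 2*η)) * (2 * (s:ℝ)) := by
          rw [key]; nlinarith
      _ = ((Real.sqrt 2 + ε) * (2 * (s:ℝ))) * (1 - 2*η) := by ring
      _ ≤ ((Real.sqrt 2 + ε) * (2 * (s:ℝ))) * dist p' q' := by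
          apply mul_le_mul_of_nonneg_left hmin
          positivity
  · -- crossing family
    exact ⟨C, hCedges, hCcard, hCross⟩
  · -- partition lower bound
    intro m F hpart hplane
    have hex : ∀ e ∈ C, ∃ i, e ∈ F i := by
      intro e he
      have h1 : e ∈ edges (↑A : Set Pt) := hCedges (Finset.mem_coe.2 he)
      rw [← hpart.1] at h1
      exact Set.mem_iUnion.1 h1
    choose φ hφ using hex
    have hinj : Set.InjOn (fun e : {x // x ∈ C} => φ e.1 e.2) ↑C.attach := by
      intro a _ b _ hab
      by_contra hne
      have hne' : a.1 ≠ b.1 := fun h => hne (Subtype.ext h)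
      have hcr := hCross a.1 a.2 b.1 b.2 hne'
      have hab' : φ a.1 a.2 = φ b.1 b.2 := hab
      exact hplane (φ a.1 a.2) a.1 (hφ a.1 a.2) b.1
        (by rw [hab']; exact hφ b.1 b.2) hcr
    have hle := Finset.card_le_card_of_injOn (fun e : {x // x ∈ C} => φ e.1 e.2)
      (fun a _ => Finset.mem_univ _) hinj
    rw [Finset.card_attach, hCcard] at hle
    simpa using hle
end
end

section
/- Let a₁ ∈ [0, 1/5] × [0, 1/5], a₂ ∈ [4/5, 1] × [0, 1/5], a₃ ∈ [2/5, 3/5] × [4/5, 1], and a₄ ∈ [2/5, 3/5] × [1/5, 2/5] be points of the plane. Then a₄ lies in the convex hull of {a₁, a₂, a₃}. -/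
noncomputable section

/-- If `a₁ ∈ [0,1/5] × [0,1/5]`, `a₂ ∈ [4/5,1] × [0,1/5]`, `a₃ ∈ [2/5,3/5] × [4/5,1]`
and `a₄ ∈ [2/5,3/5] × [1/5,2/5]`, then `a₄` lies in the convex hull of
`{a₁, a₂, a₃}`. -/
theorem point_in_triangle (a₁ a₂ a₃ a₄ : Pt)
    (h₁ : a₁ 0 ∈ Set.Icc (0 : ℝ) (1 / 5) ∧ a₁ 1 ∈ Set.Icc (0 : ℝ) (1 / 5))
    (h₂ : a₂ 0 ∈ Set.Icc (4 / 5 : ℝ) 1 ∧ a₂ 1 ∈ Set.Icc (0 : ℝ) (1 / 5))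
    (h₃ : a₃ 0 ∈ Set.Icc (2 / 5 : ℝ) (3 / 5) ∧ a₃ 1 ∈ Set.Icc (4 / 5 : ℝ) 1)
    (h₄ : a₄ 0 ∈ Set.Icc (2 / 5 : ℝ) (3 / 5) ∧ a₄ 1 ∈ Set.Icc (1 / 5 : ℝ) (2 / 5)) :
    a₄ ∈ convexHull ℝ ({a₁, a₂, a₃} : Set Pt) := by
  obtain ⟨⟨hx1l, hx1u⟩, hy1l, hy1u⟩ := h₁
  obtain ⟨⟨hx2l, hx2u⟩, hy2l, hy2u⟩ := h₂
  obtain ⟨⟨hx3l, hx3u⟩, hy3l, hy3u⟩ := h₃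
  obtain ⟨⟨hx4l, hx4u⟩, hy4l, hy4u⟩ := h₄
  set μ₁ : ℝ := ((a₂ 0) - (a₄ 0)) * ((a₃ 1) - (a₄ 1)) - ((a₃ 0) - (a₄ 0)) * ((a₂ 1) - (a₄ 1)) with hμ₁def
  set μ₂ : ℝ := ((a₃ 0) - (a₄ 0)) * ((a₁ 1) - (a₄ 1)) - ((a₁ 0) - (a₄ 0)) * ((a₃ 1) - (a₄ 1)) with hμ₂def
  set μ₃ : ℝ := ((a₁ 0) - (a₄ 0)) * ((a₂ 1) - (a₄ 1)) - ((a₂ 0) - (a₄ 0)) * ((a₁ 1) - (a₄ 1)) with hμ₃def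
  have hμ₁ : 0 ≤ μ₁ := by nlinarith [mul_nonneg (by linarith : (0:ℝ) ≤ (a₂ 0) - (a₄ 0)) (by linarith : (0:ℝ) ≤ (a₃ 1) - (a₄ 1))]
  have hμ₂ : 0 ≤ μ₂ := by nlinarith [mul_nonneg (by linarith : (0:ℝ) ≤ (a₄ 0) - (a₁ 0)) (by linarith : (0:ℝ) ≤ (a₃ 1) - (a₄ 1))]
  have hμ₃ : 0 ≤ μ₃ := by
    nlinarith [mul_nonneg (by linarith : (0:ℝ) ≤ (a₄ 0) - (a₁ 0)) (by linarith : (0:ℝ) ≤ (a₄ 1) - (a₂ 1)),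
      mul_nonneg (by linarith : (0:ℝ) ≤ (a₂ 0) - (a₄ 0)) (by linarith : (0:ℝ) ≤ (a₄ 1) - (a₁ 1))]
  have hsum : 0 < μ₁ + μ₂ + μ₃ := by
    have : μ₁ + μ₂ + μ₃ = ((a₂ 0) - (a₁ 0)) * ((a₃ 1) - (a₁ 1)) - ((a₃ 0) - (a₁ 0)) * ((a₂ 1) - (a₁ 1)) := by ring
    rw [this]
    nlinarith [mul_nonneg (by linarith : (0:ℝ) ≤ (a₂ 0) - (a₁ 0) - 3/5) (by linarith : (0:ℝ) ≤ (a₃ 1) - (a₁ 1) - 3/5)]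
  have key : (Finset.univ : Finset (Fin 3)).centerMass ![μ₁, μ₂, μ₃] ![a₁, a₂, a₃]
      ∈ convexHull ℝ ({a₁, a₂, a₃} : Set Pt) := by
    apply Finset.centerMass_mem_convexHull
    · intro i _
      fin_cases i <;> simpa using (by assumption : _)
    · simpa [Fin.sum_univ_three] using hsum
    · intro i _
      fin_cases i <;> simp
  have heq : (Finset.univ : Finset (Fin 3)).centerMass ![μ₁, μ₂, μ₃] ![a₁, a₂, a₃] = a₄ := by
    rw [Finset.centerMass]
    have hne : μ₁ + μ₂ + μ₃ ≠ 0 := ne_of_gt hsum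
    ext j
    simp only [Fin.sum_univ_three, Matrix.cons_val_zero, Matrix.cons_val_one, Matrix.head_cons,
      Matrix.cons_val_two, Matrix.tail_cons, PiLp.smul_apply, PiLp.add_apply, smul_eq_mul]
    fin_cases j
    · show (μ₁ + μ₂ + μ₃)⁻¹ * (μ₁ * a₁ 0 + μ₂ * a₂ 0 + μ₃ * a₃ 0) = a₄ 0
      field_simp
      rw [hμ₁def, hμ₂def, hμ₃def]; ring
    · show (μ₁ + μ₂ + μ₃)⁻¹ * (μ₁ * a₁ 1 + μ₂ * a₂ 1 + μ₃ * a₃ 1) = a₄ 1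
      field_simp
      rw [hμ₁def, hμ₂def, hμ₃def]; ring
  rwa [heq] at key
end
end
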